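/- arXiv:1608.02197 — 5 statements merged into one kernel-verified Lean document; each statement's English description precedes it below -/
import Mathlib

section
/- Let k ≥ 1 and n_1,…,n_k be integers with each n_i ≥ 2. The number of edges of the hierarchical graph H_{n_1,…,n_k} equals C(n_1,2)·∏_{i=2}^{k} n_i + ∑_{i=2}^{k} ( ∏_{j=1}^{i} (n_j−1) )·( ∏_{j=i+1}^{k} n_j ) + ∑_{i=2}^{k} C(n_i−1,2)·( ∏_{j=i+1}^{k} n_j ), where C(m,2) = m(m−1)/2 and empty products equal 1. -/
/-- The value of the `j`-th coordinate (0-indexed) of the string `x`,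
extended by `0` for positions `≥ k`. -/
def extVal (n : ℕ → ℕ) (k : ℕ) (x : ∀ i : Fin k, Fin (n i)) (j : ℕ) : ℕ :=
  if h : j < k then (x ⟨j, h⟩).val else 0

/-- The alternating number of the string `x`: the number of (0-indexed) positions
`j ∈ {0,…,k-1}` such that exactly one of `x_j`, `x_{j+1}` is zero (with `x_k := 0`). -/
def altNum (n : ℕ → ℕ) (k : ℕ) (x : ∀ i : Fin k, Fin (n i)) : ℕ :=
  ((Finset.range k).filter (fun j =>
    (extVal n k x j = 0 ∧ extVal n k x (j + 1) ≠ 0) ∨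
    (extVal n k x j ≠ 0 ∧ extVal n k x (j + 1) = 0))).card

/-- Adjacency in the hierarchical graph `H_{n_1,…,n_k}` (coordinates 0-indexed):
rule (A1): the two strings differ exactly in the first coordinate;
rule (A2): for some `j`, one string has its first `j+1` coordinates all zero, the other
has its first `j+1` coordinates all nonzero, and they agree on the remaining coordinates;
rule (A3): for some `m ≥ 1`, both strings have their first `m` coordinates zero, their
`m`-th coordinates are distinct and nonzero, and they agree beyond position `m`. -/
def HierAdj (n : ℕ → ℕ) (k : ℕ) (x y : ∀ i : Fin k, Fin (n i)) : Prop :=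
  x ≠ y ∧
    ((∀ i : Fin k, 0 < i.val → x i = y i) ∨
     (∃ j : Fin k,
       (((∀ i : Fin k, i.val ≤ j.val → (x i).val = 0) ∧
         (∀ i : Fin k, i.val ≤ j.val → (y i).val ≠ 0)) ∨
        ((∀ i : Fin k, i.val ≤ j.val → (y i).val = 0) ∧
         (∀ i : Fin k, i.val ≤ j.val → (x i).val ≠ 0))) ∧
       (∀ i : Fin k, j.val < i.val → x i = y i)) ∨
     (∃ m : Fin k, 0 < m.val ∧
       (∀ i : Fin k, i.val < m.val → (x i).val = 0 ∧ (y i).val = 0) ∧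
       (x m).val ≠ 0 ∧ (y m).val ≠ 0 ∧ x m ≠ y m ∧
       (∀ i : Fin k, m.val < i.val → x i = y i)))

/-- The hierarchical graph `H_{n_1,…,n_k}` as a simple graph on the strings
`x = x_1…x_k` with `x_i ∈ Z_{n_i}`. -/
def hierGraph (n : ℕ → ℕ) (k : ℕ) : SimpleGraph (∀ i : Fin k, Fin (n i)) where
  Adj := HierAdj n k
  symm := by
    constructor
    rintro x y ⟨hne, h⟩
    refine ⟨hne.symm, ?_⟩
    rcases h with h | ⟨j, hj, hag⟩ | ⟨m, hm, hpre, hx, hy, hxy, hs⟩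
    · exact Or.inl fun i hi => (h i hi).symm
    · exact Or.inr (Or.inl ⟨j, hj.symm, fun i hi => (hag i hi).symm⟩)
    · exact Or.inr (Or.inr ⟨m, hm, fun i hi => ⟨(hpre i hi).2, (hpre i hi).1⟩,
        hy, hx, hxy.symm, fun i hi => (hs i hi).symm⟩)
  loopless := ⟨fun x h => h.1 rfl⟩


open Finset
open scoped Classical

noncomputable section HierAux

variable (n : ℕ → ℕ) (k : ℕ)

def HP1 : Finset ((∀ i : Fin k, Fin (n i)) × (∀ i : Fin k, Fin (n i))) :=
  univ.filter fun p => p.1 ≠ p.2 ∧ ∀ i : Fin k, 0 < i.val → p.1 i = p.2 i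

def HP2 (j : ℕ) : Finset ((∀ i : Fin k, Fin (n i)) × (∀ i : Fin k, Fin (n i))) :=
  univ.filter fun p =>
    (((∀ i : Fin k, i.val ≤ j → (p.1 i).val = 0) ∧
      (∀ i : Fin k, i.val ≤ j → (p.2 i).val ≠ 0)) ∨
     ((∀ i : Fin k, i.val ≤ j → (p.2 i).val = 0) ∧
      (∀ i : Fin k, i.val ≤ j → (p.1 i).val ≠ 0))) ∧
    ∀ i : Fin k, j < i.val → p.1 i = p.2 i

def HP3 (m : ℕ) : Finset ((∀ i : Fin k, Fin (n i)) × (∀ i : Fin k, Fin (n i))) :=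
  univ.filter fun p =>
    (∀ i : Fin k, i.val < m → (p.1 i).val = 0 ∧ (p.2 i).val = 0) ∧
    (∀ i : Fin k, i.val = m → (p.1 i).val ≠ 0 ∧ (p.2 i).val ≠ 0 ∧ p.1 i ≠ p.2 i) ∧
    ∀ i : Fin k, m < i.val → p.1 i = p.2 i

theorem hier_cover (hk : 1 ≤ k) :
    (univ.filter fun p : (∀ i : Fin k, Fin (n i)) × (∀ i : Fin k, Fin (n i)) =>
        (hierGraph n k).Adj p.1 p.2) =
      HP1 n k ∪ (Ico 1 k).biUnion (HP2 n k) ∪ (Ico 1 k).biUnion (HP3 n k) := by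
  ext p
  simp only [mem_filter, mem_union, mem_biUnion, mem_univ, true_and, mem_Ico,
    HP1, HP2, HP3]
  change HierAdj n k p.1 p.2 ↔ _
  unfold HierAdj
  constructor
  · rintro ⟨hne, h | ⟨j, hj, hag⟩ | ⟨m, hm, hpre, hx, hy, hxy, hs⟩⟩
    · exact Or.inl (Or.inl ⟨hne, h⟩)
    · rcases Nat.eq_zero_or_pos j.val with h0 | h0
      · refine Or.inl (Or.inl ⟨hne, fun i hi => hag i (h0 ▸ hi)⟩)
      · exact Or.inl (Or.inr ⟨j.val, ⟨h0, j.isLt⟩, ⟨hj, hag⟩⟩)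
    · refine Or.inr ⟨m.val, ⟨hm, m.isLt⟩, hpre, ?_, hs⟩
      intro i hi
      have : i = m := Fin.ext hi
      subst this
      exact ⟨hx, hy, hxy⟩
  · rintro ((⟨hne, h⟩ | ⟨j, ⟨hj1, hjk⟩, hcase, hag⟩) | ⟨m, ⟨hm1, hmk⟩, hpre, hat, hs⟩)
    · exact ⟨hne, Or.inl h⟩
    · have i0 : Fin k := ⟨0, hk⟩
      refine ⟨?_, Or.inr (Or.inl ⟨⟨j, hjk⟩, hcase, hag⟩)⟩
      intro hpq
      rcases hcase with ⟨h1, h2⟩ | ⟨h1, h2⟩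
      · exact h2 ⟨0, hk⟩ (Nat.zero_le _) (by rw [← hpq]; exact h1 ⟨0, hk⟩ (Nat.zero_le _))
      · exact h2 ⟨0, hk⟩ (Nat.zero_le _) (by rw [hpq]; exact h1 ⟨0, hk⟩ (Nat.zero_le _))
    · have im : Fin k := ⟨m, hmk⟩
      obtain ⟨hx, hy, hxy⟩ := hat ⟨m, hmk⟩ rfl
      refine ⟨?_, Or.inr (Or.inr ⟨⟨m, hmk⟩, hm1, hpre, hx, hy, hxy, hs⟩)⟩
      intro hpq
      exact hxy (by rw [hpq])
end HierAux

section HierAux2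
open Finset
open scoped Classical
variable (n : ℕ → ℕ) (k : ℕ)

theorem hier_card_split (hk : 1 ≤ k) :
    (univ.filter fun p : (∀ i : Fin k, Fin (n i)) × (∀ i : Fin k, Fin (n i)) =>
        (hierGraph n k).Adj p.1 p.2).card =
      (HP1 n k).card + (∑ j ∈ Ico 1 k, (HP2 n k j).card) +
        ∑ m ∈ Ico 1 k, (HP3 n k m).card := by
  classical
  have h2ne : ∀ j ∈ Ico 1 k, ∀ p ∈ HP2 n k j, p.1 ⟨0, hk⟩ ≠ p.2 ⟨0, hk⟩ := by
    intro j hj p hp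
    simp only [HP2, mem_filter] at hp
    rcases hp.2.1 with ⟨h1, h2⟩ | ⟨h1, h2⟩
    · intro he
      exact h2 ⟨0, hk⟩ (Nat.zero_le _) (by rw [← he]; exact h1 ⟨0, hk⟩ (Nat.zero_le _))
    · intro he
      exact h2 ⟨0, hk⟩ (Nat.zero_le _) (by rw [he]; exact h1 ⟨0, hk⟩ (Nat.zero_le _))
  have d12 : Disjoint (HP1 n k) ((Ico 1 k).biUnion (HP2 n k)) := by
    rw [Finset.disjoint_left]
    intro p hp1 hp2
    rw [Finset.mem_biUnion] at hp2
    obtain ⟨j, hj, hpj⟩ := hp2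
    simp only [HP1, mem_filter] at hp1
    simp only [HP2, mem_filter] at hpj
    rw [mem_Ico] at hj
    have h1k : 1 < k := lt_of_le_of_lt hj.1 hj.2
    have heq : p.1 ⟨1, h1k⟩ = p.2 ⟨1, h1k⟩ := hp1.2.2 ⟨1, h1k⟩ (by norm_num)
    rcases hpj.2.1 with ⟨h1, h2⟩ | ⟨h1, h2⟩
    · exact h2 ⟨1, h1k⟩ hj.1 (by rw [← heq]; exact h1 ⟨1, h1k⟩ hj.1)
    · exact h2 ⟨1, h1k⟩ hj.1 (by rw [heq]; exact h1 ⟨1, h1k⟩ hj.1)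
  have d13 : Disjoint (HP1 n k) ((Ico 1 k).biUnion (HP3 n k)) := by
    rw [Finset.disjoint_left]
    intro p hp1 hp3
    rw [Finset.mem_biUnion] at hp3
    obtain ⟨m, hm, hpm⟩ := hp3
    simp only [HP1, mem_filter] at hp1
    simp only [HP3, mem_filter] at hpm
    rw [mem_Ico] at hm
    exact (hpm.2.2.1 ⟨m, hm.2⟩ rfl).2.2 (hp1.2.2 ⟨m, hm.2⟩ hm.1)
  have d23 : Disjoint ((Ico 1 k).biUnion (HP2 n k)) ((Ico 1 k).biUnion (HP3 n k)) := by
    rw [Finset.disjoint_left]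
    intro p hp2 hp3
    rw [Finset.mem_biUnion] at hp2 hp3
    obtain ⟨j, hj, hpj⟩ := hp2
    obtain ⟨m, hm, hpm⟩ := hp3
    rw [mem_Ico] at hm
    simp only [HP3, mem_filter] at hpm
    have h0 : (p.1 ⟨0, hk⟩).val = 0 ∧ (p.2 ⟨0, hk⟩).val = 0 := hpm.2.1 ⟨0, hk⟩ hm.1
    simp only [HP2, mem_filter] at hpj
    rcases hpj.2.1 with ⟨h1, h2⟩ | ⟨h1, h2⟩
    · exact h2 ⟨0, hk⟩ (Nat.zero_le _) h0.2
    · exact h2 ⟨0, hk⟩ (Nat.zero_le _) h0.1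
  have dP2 : ∀ j1 ∈ Ico 1 k, ∀ j2 ∈ Ico 1 k, j1 ≠ j2 →
      Disjoint (HP2 n k j1) (HP2 n k j2) := by
    have key : ∀ j1 j2, j1 < j2 → j2 < k → Disjoint (HP2 n k j1) (HP2 n k j2) := by
      intro j1 j2 hlt hk2
      rw [Finset.disjoint_left]
      intro p hp1 hp2
      simp only [HP2, mem_filter] at hp1 hp2
      have heq : p.1 ⟨j2, hk2⟩ = p.2 ⟨j2, hk2⟩ := hp1.2.2 ⟨j2, hk2⟩ hlt
      rcases hp2.2.1 with ⟨h1, h2⟩ | ⟨h1, h2⟩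
      · exact h2 ⟨j2, hk2⟩ le_rfl (by rw [← heq]; exact h1 ⟨j2, hk2⟩ le_rfl)
      · exact h2 ⟨j2, hk2⟩ le_rfl (by rw [heq]; exact h1 ⟨j2, hk2⟩ le_rfl)
    intro j1 hj1 j2 hj2 hne
    rw [mem_Ico] at hj1 hj2
    rcases hne.lt_or_gt with h | h
    · exact key j1 j2 h hj2.2
    · exact (key j2 j1 h hj1.2).symm
  have dP3 : ∀ m1 ∈ Ico 1 k, ∀ m2 ∈ Ico 1 k, m1 ≠ m2 →
      Disjoint (HP3 n k m1) (HP3 n k m2) := by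
    have key : ∀ m1 m2, m1 < m2 → m2 < k → Disjoint (HP3 n k m1) (HP3 n k m2) := by
      intro m1 m2 hlt hk2
      rw [Finset.disjoint_left]
      intro p hp1 hp2
      simp only [HP3, mem_filter] at hp1 hp2
      have h1k : m1 < k := lt_trans hlt hk2
      exact (hp1.2.2.1 ⟨m1, h1k⟩ rfl).1 ((hp2.2.1 ⟨m1, h1k⟩ hlt).1)
    intro m1 hm1 m2 hm2 hne
    rw [mem_Ico] at hm1 hm2
    rcases hne.lt_or_gt with h | h
    · exact key m1 m2 h hm2.2
    · exact (key m2 m1 h hm1.2).symm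
  rw [hier_cover n k hk, Finset.card_union_of_disjoint, Finset.card_union_of_disjoint d12,
    Finset.card_biUnion dP2, Finset.card_biUnion dP3]
  · exact Finset.disjoint_union_left.mpr ⟨d13, d23⟩
end HierAux2

section HierAux3
open Finset
open scoped Classical
variable (n : ℕ → ℕ) (k : ℕ)

theorem card_pi_filter (P : ∀ i : Fin k, Fin (n i) → Prop)
    [∀ i, DecidablePred (P i)]
    [DecidablePred fun x : ∀ i : Fin k, Fin (n i) => ∀ i, P i (x i)] :
    (univ.filter fun x : ∀ i : Fin k, Fin (n i) => ∀ i, P i (x i)).card =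
      ∏ i : Fin k, (univ.filter fun v : Fin (n i) => P i v).card := by
  rw [← Fintype.card_subtype]
  rw [Fintype.card_congr (Equiv.subtypePiEquivPi (p := P))]
  rw [Fintype.card_pi]
  exact Finset.prod_congr rfl fun i _ => Fintype.card_subtype _

theorem card_fin_ne_zero (N : ℕ) :
    (univ.filter fun v : Fin N => v.val ≠ 0).card = N - 1 := by
  cases N with
  | zero => simp
  | succ M =>
    have : (univ.filter fun v : Fin (M+1) => v.val ≠ 0) = univ.erase 0 := by
      ext v
      simp only [mem_filter, mem_erase, mem_univ, true_and, and_true, ne_eq, Fin.ext_iff, Fin.val_zero]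
    rw [this, Finset.card_erase_of_mem (mem_univ _), Finset.card_univ, Fintype.card_fin]

theorem card_fin_eq_zero (N : ℕ) (hN : 0 < N) :
    (univ.filter fun v : Fin N => v.val = 0).card = 1 := by
  cases N with
  | zero => omega
  | succ M =>
    have : (univ.filter fun v : Fin (M+1) => v.val = 0) = {0} := by
      ext v
      simp only [mem_filter, mem_singleton, mem_univ, true_and, Fin.ext_iff, Fin.val_zero]
    rw [this, Finset.card_singleton]

theorem card_fin_ne_two (N : ℕ) (a : Fin N) (ha : a.val ≠ 0) :
    (univ.filter fun b : Fin N => b.val ≠ 0 ∧ b ≠ a).card = N - 2 := by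
  cases N with
  | zero => exact absurd a.isLt (by omega)
  | succ M =>
    have : (univ.filter fun b : Fin (M+1) => b.val ≠ 0 ∧ b ≠ a) = univ \ {0, a} := by
      ext b
      simp only [mem_filter, mem_univ, true_and, Finset.mem_sdiff, Finset.mem_insert,
        Finset.mem_singleton, ne_eq, Fin.ext_iff, Fin.val_zero]
      tauto
    rw [this, Finset.card_sdiff_of_subset (Finset.subset_univ _), Finset.card_univ, Fintype.card_fin,
      Finset.card_insert_of_notMem (by
        simp only [Finset.mem_singleton, Fin.ext_iff, Fin.val_zero]; omega),
      Finset.card_singleton]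

end HierAux3

section HierAux4
open Finset
open scoped Classical
variable (n : ℕ → ℕ) (k : ℕ)

theorem card_HP1 (hk : 1 ≤ k) :
    (HP1 n k).card = (∏ i ∈ Finset.range k, n i) * (n 0 - 1) := by
  classical
  set i0 : Fin k := ⟨0, hk⟩ with hi0
  have hcard : (HP1 n k).card =
      ((univ : Finset (∀ i : Fin k, Fin (n i))).sigma
        (fun x => univ.filter fun b : Fin (n 0) => b ≠ x i0)).card := by
    refine Finset.card_nbij' (fun p => ⟨p.1, p.2 i0⟩) (fun q => (q.1, Function.update q.1 i0 q.2))
      ?_ ?_ ?_ ?_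
    · intro p hp
      simp only [HP1, mem_filter, mem_univ, true_and, Finset.mem_coe] at hp
      simp only [Finset.mem_sigma, mem_univ, mem_filter, true_and, Finset.mem_coe]
      intro heq
      refine hp.1 ?_
      funext i
      rcases Nat.eq_zero_or_pos i.val with h0 | h0
      · have : i = i0 := Fin.ext h0
        subst this
        exact heq.symm
      · exact hp.2 i h0
    · intro q hq
      simp only [Finset.mem_sigma, mem_univ, mem_filter, true_and, Finset.mem_coe] at hq
      simp only [HP1, mem_filter, mem_univ, true_and, Finset.mem_coe]
      constructor
      · intro heq
        have h := congrFun heq i0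
        rw [Function.update_self] at h
        exact hq h.symm
      · intro i hi
        have hne : i ≠ i0 := by
          intro h; rw [h] at hi; simp [hi0] at hi
        simp [Function.update_of_ne hne]
    · intro p hp
      simp only [HP1, mem_filter, mem_univ, true_and, Finset.mem_coe] at hp
      have h2 : Function.update p.1 i0 (p.2 i0) = p.2 := by
        funext i
        rcases Nat.eq_zero_or_pos i.val with h0 | h0
        · have : i = i0 := Fin.ext h0
          subst this
          rw [Function.update_self]
        · have hne : i ≠ i0 := by
            intro h; rw [h] at h0; simp [hi0] at h0
          rw [Function.update_of_ne hne, hp.2 i h0]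
      simp [h2]
    · intro q hq
      simp only [Sigma.mk.inj_iff, heq_eq_eq, Function.update_self]
  rw [hcard, Finset.card_sigma]
  have hstep : ∀ x : ∀ i : Fin k, Fin (n i),
      (univ.filter fun b : Fin (n 0) => b ≠ x i0).card = n 0 - 1 := by
    intro x
    rw [Finset.filter_ne', Finset.card_erase_of_mem (mem_univ _), Finset.card_univ,
      Fintype.card_fin]
  rw [Finset.sum_congr rfl fun x _ => hstep x, Finset.sum_const, Finset.card_univ,
    Fintype.card_pi, smul_eq_mul]
  congr 1
  rw [← Fin.prod_univ_eq_prod_range]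
  exact Finset.prod_congr rfl fun i _ => Fintype.card_fin _
end HierAux4

section HierAux5
open Finset
open scoped Classical
variable (n : ℕ → ℕ) (k : ℕ)

theorem card_Yj (j : ℕ) (hjk : j < k) :
    (univ.filter fun y : ∀ i : Fin k, Fin (n i) =>
        ∀ i : Fin k, i.val ≤ j → (y i).val ≠ 0).card =
      (∏ i ∈ Finset.range (j+1), (n i - 1)) * ∏ i ∈ Finset.Ico (j+1) k, n i := by
  classical
  rw [card_pi_filter n k (fun i v => i.val ≤ j → v.val ≠ 0)]
  have step : ∀ i : Fin k,
      (univ.filter fun v : Fin (n i) => i.val ≤ j → v.val ≠ 0).card =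
        if i.val ≤ j then n i - 1 else n i := by
    intro i
    by_cases h : i.val ≤ j
    · rw [if_pos h]
      have : (univ.filter fun v : Fin (n i) => i.val ≤ j → v.val ≠ 0) =
          (univ.filter fun v : Fin (n i) => v.val ≠ 0) := by
        ext v; simp [h]
      rw [this, card_fin_ne_zero]
    · rw [if_neg h]
      have : (univ.filter fun v : Fin (n i) => i.val ≤ j → v.val ≠ 0) = univ := by
        ext v; simp [h]
      rw [this, Finset.card_univ, Fintype.card_fin]
  rw [Finset.prod_congr rfl fun i _ => step i]

  rw [Fin.prod_univ_eq_prod_range (fun i => if i ≤ j then n i - 1 else n i) k]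
  rw [Finset.range_eq_Ico, ← Finset.prod_Ico_consecutive _ (Nat.zero_le (j+1)) hjk,
    ← Finset.range_eq_Ico]
  congr 1
  · exact Finset.prod_congr rfl fun i hi => if_pos (by rw [Finset.mem_range] at hi; omega)
  · exact Finset.prod_congr rfl fun i hi => if_neg (by rw [Finset.mem_Ico] at hi; omega)

theorem card_HP2 (hn : ∀ i < k, 2 ≤ n i) (j : ℕ) (hjk : j < k) :
    (HP2 n k j).card =
      2 * ((∏ i ∈ Finset.range (j+1), (n i - 1)) * ∏ i ∈ Finset.Ico (j+1) k, n i) := by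
  classical
  have hk : 0 < k := lt_of_le_of_lt (Nat.zero_le j) hjk
  set V := ∀ i : Fin k, Fin (n i)
  set A : Finset (V × V) := univ.filter fun p =>
    ((∀ i : Fin k, i.val ≤ j → (p.1 i).val = 0) ∧
     (∀ i : Fin k, i.val ≤ j → (p.2 i).val ≠ 0)) ∧
    ∀ i : Fin k, j < i.val → p.1 i = p.2 i with hA
  set B : Finset (V × V) := univ.filter fun p =>
    ((∀ i : Fin k, i.val ≤ j → (p.2 i).val = 0) ∧
     (∀ i : Fin k, i.val ≤ j → (p.1 i).val ≠ 0)) ∧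
    ∀ i : Fin k, j < i.val → p.1 i = p.2 i with hB
  have hsplit : HP2 n k j = A ∪ B := by
    ext p
    simp only [HP2, hA, hB, mem_filter, mem_union, mem_univ, true_and]
    tauto
  have hdisj : Disjoint A B := by
    rw [Finset.disjoint_left]
    intro p hpa hpb
    simp only [hA, mem_filter, mem_univ, true_and] at hpa
    simp only [hB, mem_filter, mem_univ, true_and] at hpb
    exact hpb.1.2 ⟨0, hk⟩ (Nat.zero_le _) (hpa.1.1 ⟨0, hk⟩ (Nat.zero_le _))
  have hzx : ∀ i : Fin k, 0 < n i := fun i => lt_of_lt_of_le two_pos (hn i i.isLt)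
  have cardA : A.card = (univ.filter fun y : V =>
      ∀ i : Fin k, i.val ≤ j → (y i).val ≠ 0).card := by
    refine Finset.card_nbij' (fun p => p.2)
      (fun y => (fun i : Fin k => if i.val ≤ j then ⟨0, hzx i⟩ else y i, y)) ?_ ?_ ?_ ?_
    · intro p hp
      simp only [hA, mem_filter, mem_univ, true_and, Finset.mem_coe] at hp
      simp only [mem_filter, mem_univ, true_and, Finset.mem_coe]
      exact hp.1.2
    · intro y hy
      simp only [mem_filter, mem_univ, true_and, Finset.mem_coe] at hy
      simp only [hA, mem_filter, mem_univ, true_and, Finset.mem_coe]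
      refine ⟨⟨fun i hi => by simp [if_pos hi], hy⟩, fun i hi => ?_⟩
      simp [if_neg (Nat.not_le.mpr hi)]
    · intro p hp
      simp only [hA, mem_filter, mem_univ, true_and, Finset.mem_coe] at hp
      have h1 : (fun i : Fin k => if i.val ≤ j then (⟨0, hzx i⟩ : Fin (n i)) else p.2 i)
          = p.1 := by
        funext i
        by_cases h : i.val ≤ j
        · rw [if_pos h]
          exact (Fin.ext (hp.1.1 i h)).symm
        · rw [if_neg h]
          exact (hp.2 i (Nat.not_le.mp h)).symm
      simp [h1]
    · intro y hy
      rfl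
  have cardB : B.card = A.card := by
    refine Finset.card_nbij' (fun p => (p.2, p.1)) (fun p => (p.2, p.1)) ?_ ?_ ?_ ?_
    · intro p hp
      simp only [hA, hB, mem_filter, mem_univ, true_and, Finset.mem_coe] at hp ⊢
      exact ⟨hp.1, fun i hi => (hp.2 i hi).symm⟩
    · intro p hp
      simp only [hA, hB, mem_filter, mem_univ, true_and, Finset.mem_coe] at hp ⊢
      exact ⟨hp.1, fun i hi => (hp.2 i hi).symm⟩
    · intro p _; rfl
    · intro p _; rfl
  rw [hsplit, Finset.card_union_of_disjoint hdisj, cardA, cardB, cardA,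
    card_Yj n k j hjk, two_mul]
end HierAux5

section HierAux6
open Finset
open scoped Classical
variable (n : ℕ → ℕ) (k : ℕ)

theorem card_Xm (hn : ∀ i < k, 2 ≤ n i) (m : ℕ) (hmk : m < k) :
    (univ.filter fun x : ∀ i : Fin k, Fin (n i) =>
        ∀ i : Fin k, (i.val < m → (x i).val = 0) ∧ (i.val = m → (x i).val ≠ 0)).card =
      (n m - 1) * ∏ i ∈ Finset.Ico (m+1) k, n i := by
  classical
  rw [card_pi_filter n k (fun i v => (i.val < m → v.val = 0) ∧ (i.val = m → v.val ≠ 0))]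
  have step : ∀ i : Fin k,
      (univ.filter fun v : Fin (n i) =>
          (i.val < m → v.val = 0) ∧ (i.val = m → v.val ≠ 0)).card =
        if i.val < m then 1 else if i.val = m then n i - 1 else n i := by
    intro i
    rcases lt_trichotomy i.val m with h | h | h
    · rw [if_pos h]
      have he : (univ.filter fun v : Fin (n i) =>
          (i.val < m → v.val = 0) ∧ (i.val = m → v.val ≠ 0)) =
          (univ.filter fun v : Fin (n i) => v.val = 0) := by
        ext v; simp [h, Nat.ne_of_lt h]
      rw [he, card_fin_eq_zero _ (lt_of_lt_of_le two_pos (hn i i.isLt))]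
    · rw [if_neg (by omega), if_pos h]
      have he : (univ.filter fun v : Fin (n i) =>
          (i.val < m → v.val = 0) ∧ (i.val = m → v.val ≠ 0)) =
          (univ.filter fun v : Fin (n i) => v.val ≠ 0) := by
        ext v; simp [h]
      rw [he, card_fin_ne_zero]
    · rw [if_neg (by omega), if_neg (by omega)]
      have he : (univ.filter fun v : Fin (n i) =>
          (i.val < m → v.val = 0) ∧ (i.val = m → v.val ≠ 0)) = univ := by
        ext v
        simp only [mem_filter, mem_univ, true_and, iff_true]
        exact ⟨fun hh => absurd hh (by omega), fun hh => absurd hh (by omega)⟩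
      rw [he, Finset.card_univ, Fintype.card_fin]
  rw [Finset.prod_congr rfl fun i _ => step i]
  rw [Fin.prod_univ_eq_prod_range (fun t => if t < m then 1 else if t = m then n t - 1 else n t) k]
  rw [Finset.range_eq_Ico, ← Finset.prod_Ico_consecutive _ (Nat.zero_le m) (le_of_lt hmk),
    ← Finset.prod_Ico_consecutive _ (Nat.le_succ m) hmk]
  have h1 : ∏ t ∈ Finset.Ico 0 m, (if t < m then 1 else if t = m then n t - 1 else n t) = 1 := by
    refine Finset.prod_eq_one fun t ht => ?_
    rw [Finset.mem_Ico] at ht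
    rw [if_pos ht.2]
  have h2 : ∏ t ∈ Finset.Ico m (m+1), (if t < m then 1 else if t = m then n t - 1 else n t)
      = n m - 1 := by
    rw [Nat.Ico_succ_singleton, Finset.prod_singleton, if_neg (lt_irrefl m), if_pos rfl]
  have h3 : ∏ t ∈ Finset.Ico (m+1) k, (if t < m then 1 else if t = m then n t - 1 else n t)
      = ∏ t ∈ Finset.Ico (m+1) k, n t := by
    refine Finset.prod_congr rfl fun t ht => ?_
    rw [Finset.mem_Ico] at ht
    rw [if_neg (by omega), if_neg (by omega)]
  rw [h1, h2, h3, one_mul]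

theorem card_HP3 (hn : ∀ i < k, 2 ≤ n i) (m : ℕ) (hmk : m < k) :
    (HP3 n k m).card = ((n m - 1) * (n m - 2)) * ∏ i ∈ Finset.Ico (m+1) k, n i := by
  classical
  set im : Fin k := ⟨m, hmk⟩ with him
  set X : Finset (∀ i : Fin k, Fin (n i)) := univ.filter fun x =>
    ∀ i : Fin k, (i.val < m → (x i).val = 0) ∧ (i.val = m → (x i).val ≠ 0) with hX
  have hcard : (HP3 n k m).card =
      (X.sigma (fun x => univ.filter fun b : Fin (n m) => b.val ≠ 0 ∧ b ≠ x im)).card := by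
    refine Finset.card_nbij' (fun p => ⟨p.1, p.2 im⟩)
      (fun q => (q.1, Function.update q.1 im q.2)) ?_ ?_ ?_ ?_
    · intro p hp
      simp only [HP3, mem_filter, mem_univ, true_and, Finset.mem_coe] at hp
      simp only [Finset.mem_sigma, hX, mem_filter, mem_univ, true_and, Finset.mem_coe]
      obtain ⟨hpre, hat, hs⟩ := hp
      refine ⟨fun i => ⟨fun hi => (hpre i hi).1, fun hi => (hat i hi).1⟩, ?_, ?_⟩
      · exact (hat im rfl).2.1
      · exact fun h => (hat im rfl).2.2 h.symm
    · intro q hq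
      simp only [Finset.mem_sigma, hX, mem_filter, mem_univ, true_and, Finset.mem_coe] at hq
      obtain ⟨hx, hb0, hba⟩ := hq
      simp only [HP3, mem_filter, mem_univ, true_and, Finset.mem_coe]
      refine ⟨fun i hi => ⟨(hx i).1 hi, ?_⟩, fun i hi => ?_, fun i hi => ?_⟩
      · have hne : i ≠ im := by
          intro h; rw [h] at hi; simp [him] at hi
        rw [Function.update_of_ne hne]
        exact (hx i).1 hi
      · have hieq : i = im := Fin.ext (by simp [him, hi])
        subst hieq
        refine ⟨(hx im).2 hi, ?_, ?_⟩
        · rw [Function.update_self]; exact hb0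
        · rw [Function.update_self]; exact fun h => hba h.symm
      · have hne : i ≠ im := by
          intro h; rw [h] at hi; simp [him] at hi
        rw [Function.update_of_ne hne]
    · intro p hp
      simp only [HP3, mem_filter, mem_univ, true_and, Finset.mem_coe] at hp
      obtain ⟨hpre, hat, hs⟩ := hp
      have h2 : Function.update p.1 im (p.2 im) = p.2 := by
        funext i
        rcases lt_trichotomy i.val m with h | h | h
        · have hne : i ≠ im := by intro hh; rw [hh] at h; simp [him] at h
          rw [Function.update_of_ne hne]
          exact Fin.ext (by rw [(hpre i h).1, (hpre i h).2])
        · have hieq : i = im := Fin.ext (by simp [him, h])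
          subst hieq
          rw [Function.update_self]
        · have hne : i ≠ im := by intro hh; rw [hh] at h; simp [him] at h
          rw [Function.update_of_ne hne]
          exact hs i h
      simp [h2]
    · intro q hq
      simp only [Sigma.mk.inj_iff, heq_eq_eq, Function.update_self]
  rw [hcard, Finset.card_sigma]
  have hstep : ∀ x ∈ X, (univ.filter fun b : Fin (n m) => b.val ≠ 0 ∧ b ≠ x im).card
      = n m - 2 := by
    intro x hx
    simp only [hX, mem_filter, mem_univ, true_and] at hx
    exact card_fin_ne_two (n m) (x im) ((hx im).2 rfl)
  rw [Finset.sum_congr rfl hstep, Finset.sum_const, smul_eq_mul]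
  have : X.card = (n m - 1) * ∏ i ∈ Finset.Ico (m+1) k, n i := card_Xm n k hn m hmk
  rw [this]
  ring
end HierAux6

section HierFinal
open Finset
open scoped Classical

theorem two_mul_choose_two (a : ℕ) : 2 * Nat.choose a 2 = a * (a - 1) := by
  rw [Nat.choose_two_right]
  have h : 2 ∣ a * (a - 1) := by
    rcases Nat.even_or_odd a with h | h
    · exact Dvd.dvd.mul_right h.two_dvd _
    · refine Dvd.dvd.mul_left ?_ _
      rcases h with ⟨b, hb⟩
      exact ⟨b, by omega⟩
  exact Nat.mul_div_cancel' h

theorem stmt_0' (n : ℕ → ℕ) (k : ℕ) (hk : 1 ≤ k) (hn : ∀ i < k, 2 ≤ n i) :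
    (hierGraph n k).edgeSet.ncard =
      Nat.choose (n 0) 2 * ∏ i ∈ Finset.Ico 1 k, n i +
      ∑ i ∈ Finset.Ico 1 k,
        (∏ j ∈ Finset.range (i + 1), (n j - 1)) * ∏ j ∈ Finset.Ico (i + 1) k, n j +
      ∑ i ∈ Finset.Ico 1 k,
        Nat.choose (n i - 1) 2 * ∏ j ∈ Finset.Ico (i + 1) k, n j := by
  classical
  have key : 2 * (hierGraph n k).edgeSet.ncard =
      (HP1 n k).card + (∑ j ∈ Ico 1 k, (HP2 n k j).card) +
        ∑ m ∈ Ico 1 k, (HP3 n k m).card := by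
    rw [Set.ncard_eq_toFinset_card', ← SimpleGraph.edgeFinset,
      SimpleGraph.two_mul_card_edgeFinset]
    exact hier_card_split n k hk
  have e1 : (HP1 n k).card = 2 * (Nat.choose (n 0) 2 * ∏ i ∈ Finset.Ico 1 k, n i) := by
    rw [card_HP1 n k hk, Finset.range_eq_Ico, Finset.prod_eq_prod_Ico_succ_bot hk]
    have h := two_mul_choose_two (n 0)
    calc n 0 * (∏ i ∈ Finset.Ico (0+1) k, n i) * (n 0 - 1)
        = (n 0 * (n 0 - 1)) * ∏ i ∈ Finset.Ico 1 k, n i := by ring_nf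
      _ = (2 * Nat.choose (n 0) 2) * ∏ i ∈ Finset.Ico 1 k, n i := by rw [h]
      _ = 2 * (Nat.choose (n 0) 2 * ∏ i ∈ Finset.Ico 1 k, n i) := by ring
  have e2 : ∑ j ∈ Ico 1 k, (HP2 n k j).card =
      2 * ∑ i ∈ Finset.Ico 1 k,
        (∏ j ∈ Finset.range (i + 1), (n j - 1)) * ∏ j ∈ Finset.Ico (i + 1) k, n j := by
    rw [Finset.mul_sum]
    refine Finset.sum_congr rfl fun j hj => ?_
    rw [Finset.mem_Ico] at hj
    exact card_HP2 n k hn j hj.2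
  have e3 : ∑ m ∈ Ico 1 k, (HP3 n k m).card =
      2 * ∑ i ∈ Finset.Ico 1 k,
        Nat.choose (n i - 1) 2 * ∏ j ∈ Finset.Ico (i + 1) k, n j := by
    rw [Finset.mul_sum]
    refine Finset.sum_congr rfl fun m hm => ?_
    rw [Finset.mem_Ico] at hm
    rw [card_HP3 n k hn m hm.2]
    have h := two_mul_choose_two (n m - 1)
    have h2 : n m - 1 - 1 = n m - 2 := by omega
    rw [h2] at h
    calc (n m - 1) * (n m - 2) * ∏ i ∈ Finset.Ico (m+1) k, n i
        = (2 * Nat.choose (n m - 1) 2) * ∏ i ∈ Finset.Ico (m+1) k, n i := by rw [h]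
      _ = 2 * (Nat.choose (n m - 1) 2 * ∏ i ∈ Finset.Ico (m+1) k, n i) := by ring
  rw [e1, e2, e3, ← Nat.mul_add, ← Nat.mul_add] at key
  exact Nat.eq_of_mul_eq_mul_left two_pos key
end HierFinal

/-- The number of edges of `H_{n_1,…,n_k}`. -/
theorem stmt_0 (n : ℕ → ℕ) (k : ℕ) (hk : 1 ≤ k) (hn : ∀ i < k, 2 ≤ n i) :
    (hierGraph n k).edgeSet.ncard =
      Nat.choose (n 0) 2 * ∏ i ∈ Finset.Ico 1 k, n i +
      ∑ i ∈ Finset.Ico 1 k,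
        (∏ j ∈ Finset.range (i + 1), (n j - 1)) * ∏ j ∈ Finset.Ico (i + 1) k, n j +
      ∑ i ∈ Finset.Ico 1 k,
        Nat.choose (n i - 1) 2 * ∏ j ∈ Finset.Ico (i + 1) k, n j := by
  exact stmt_0' n k hk hn
end

section
/- Let k ≥ 1 and n_1,…,n_k be integers with each n_i ≥ 2. The hierarchical graph H_{n_1,…,n_k} is connected. -/
/-- The hierarchical graph `H_{n_1,…,n_k}` is connected. -/
theorem stmt_1 (n : ℕ → ℕ) (k : ℕ) (hk : 1 ≤ k) (hn : ∀ i < k, 2 ≤ n i) :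
    (hierGraph n k).Connected := by
  have hpos : ∀ i : Fin k, 0 < n i := fun i => by have := hn i i.isLt; omega
  have h1 : ∀ i : Fin k, 1 < n i := fun i => by have := hn i i.isLt; omega
  set G := hierGraph n k with hG
  let z0 : ∀ i : Fin k, Fin (n i) := fun i => ⟨0, hpos i⟩
  have key : ∀ m : ℕ, ∀ x : ∀ i : Fin k, Fin (n i),
      G.Reachable x (fun i => if i.val < m then z0 i else x i) := by
    intro m
    induction m with
    | zero => intro x; exact SimpleGraph.Reachable.refl x
    | succ m ih =>
      intro x
      by_cases hm : m < k
      · refine (ih x).trans ?_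
        set z : ∀ i : Fin k, Fin (n i) := fun i => if i.val < m then z0 i else x i with hz
        set t : ∀ i : Fin k, Fin (n i) := fun i => if i.val < m + 1 then z0 i else x i with ht
        have hzm : z ⟨m, hm⟩ = x ⟨m, hm⟩ := by simp [hz]
        have htm : (t ⟨m, hm⟩).val = 0 := by simp [ht, z0]
        by_cases hxm : (x ⟨m, hm⟩).val = 0
        · have hzt : t = z := by
            funext i
            by_cases h : i.val < m
            · simp [hz, ht, h, Nat.lt_succ_of_lt h]
              intro h'; exact absurd h (by omega)
            · by_cases h2 : i.val = m
              · have hi : i = ⟨m, hm⟩ := Fin.ext h2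
                subst hi
                simp [hz, ht]
                exact (Fin.ext hxm.symm : z0 ⟨m, hm⟩ = x ⟨m, hm⟩)
              · have h3 : ¬ i.val < m + 1 := by omega
                simp [hz, ht, h, h3]
                intro h'; exact absurd h2 (by omega)
          rw [hzt]
        · rcases Nat.eq_zero_or_pos m with hm0 | hm1
          ·
            subst hm0
            have hzx : z = x := by
              funext i; simp [hz]
            rw [hzx]
            have hadj : G.Adj x t := by
              show HierAdj n k x t
              refine ⟨?_, Or.inl ?_⟩
              · intro h
                apply hxm
                have := congrFun h ⟨0, hm⟩
                rw [this]
                exact htm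
              · intro i hi
                have h0 : (i : ℕ) ≠ 0 := Nat.pos_iff_ne_zero.mp hi
                simp [ht, h0]
            exact hadj.reachable
          · -- m ≥ 1 : z ~ w ~ t with w having ones below m
            set w : ∀ i : Fin k, Fin (n i) :=
              fun i => if i.val < m then ⟨1, h1 i⟩ else z i with hw
            have hwm : w ⟨m, hm⟩ = x ⟨m, hm⟩ := by simp [hw, hz]
            have h0k : (0 : ℕ) < k := lt_of_le_of_lt (Nat.zero_le m) hm
            have hzw : G.Adj z w := by
              show HierAdj n k z w
              constructor
              · intro h
                have := congrFun h ⟨0, h0k⟩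
                have hz0 : (z ⟨0, h0k⟩).val = 0 := by simp [hz, hm1, z0]
                have hw0 : (w ⟨0, h0k⟩).val = 1 := by simp [hw, hm1]
                rw [this] at hz0
                omega
              · refine Or.inr (Or.inl ⟨⟨m - 1, by omega⟩, Or.inl ⟨?_, ?_⟩, ?_⟩)
                · intro i hi
                  have hi' : (i : ℕ) ≤ m - 1 := hi
                  have h : i.val < m := by omega
                  simp [hz, h, z0]
                · intro i hi
                  have hi' : (i : ℕ) ≤ m - 1 := hi
                  have h : i.val < m := by omega
                  simp [hw, h]
                · intro i hi
                  have hi' : m - 1 < (i : ℕ) := hi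
                  have h : ¬ i.val < m := by omega
                  simp [hw, h]
            have hwt : G.Adj w t := by
              show HierAdj n k w t
              constructor
              · intro h
                have := congrFun h ⟨0, h0k⟩
                have ht0 : (t ⟨0, h0k⟩).val = 0 := by simp [ht, z0]
                have hw0 : (w ⟨0, h0k⟩).val = 1 := by simp [hw, hm1]
                rw [this, ht0] at hw0
                omega
              · refine Or.inr (Or.inl ⟨⟨m, hm⟩, Or.inr ⟨?_, ?_⟩, ?_⟩)
                · intro i hi
                  have hi' : (i : ℕ) ≤ m := hi
                  have h : i.val < m + 1 := by omega
                  simp [ht, h, hi', z0]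
                · intro i hi
                  have hi' : (i : ℕ) ≤ m := hi
                  rcases Nat.lt_or_ge i.val m with h | h
                  · simp [hw, h]
                  · have him : i.val = m := by omega
                    have : i = ⟨m, hm⟩ := Fin.ext him
                    subst this
                    rw [hwm]; exact hxm
                · intro i hi
                  have hi' : m < (i : ℕ) := hi
                  have h2 : ¬ i.val < m := by omega
                  have h3 : ¬ i.val < m + 1 := by omega
                  simp [hw, hz, ht, h2, h3]
                  intro h'; exact absurd hi' (by omega)
            exact (hzw.reachable).trans hwt.reachable
      · have heq : (fun i : Fin k => if i.val < m + 1 then z0 i else x i)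
             = (fun i : Fin k => if i.val < m then z0 i else x i) := by
          funext i
          have h : i.val < m := lt_of_lt_of_le i.isLt (le_of_not_gt hm)
          simp [h, Nat.lt_succ_of_lt h]
        rw [heq]; exact ih x
  have hreach : ∀ x : ∀ i : Fin k, Fin (n i), G.Reachable x z0 := by
    intro x
    have := key k x
    have heq : (fun i : Fin k => if i.val < k then z0 i else x i) = z0 := by
      funext i; simp [i.isLt]
    rwa [heq] at this
  haveI : Nonempty (∀ i : Fin k, Fin (n i)) := ⟨z0⟩
  exact ⟨fun x y => (hreach x).trans (hreach y).symm⟩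
end

section
/- Let x and y be adjacent vertices of the hierarchical graph H_{n_1,…,n_k}. (a) If x and y are adjacent by rule (A1), i.e. they differ exactly in the first coordinate, then |alt(x) − alt(y)| = 1 when exactly one of x_1, y_1 is zero, and alt(x) = alt(y) when both x_1 and y_1 are nonzero. (b) If x and y are adjacent by rule (A2) with j ≥ 1, then |alt(x) − alt(y)| = 1. (c) If x and y are adjacent by rule (A3), then alt(x) = alt(y). -/
/-- The condition counted by `altNum` at position `j`. -/
def condP (n : ℕ → ℕ) (k : ℕ) (x : ∀ i : Fin k, Fin (n i)) (j : ℕ) : Prop :=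
  (extVal n k x j = 0 ∧ extVal n k x (j + 1) ≠ 0) ∨
  (extVal n k x j ≠ 0 ∧ extVal n k x (j + 1) = 0)

instance (n : ℕ → ℕ) (k : ℕ) (x : ∀ i : Fin k, Fin (n i)) (j : ℕ) :
    Decidable (condP n k x j) := by unfold condP; infer_instance

lemma altNum_eq_sum (n : ℕ → ℕ) (k : ℕ) (x : ∀ i : Fin k, Fin (n i)) :
    altNum n k x = ∑ j ∈ Finset.range k, (if condP n k x j then 1 else 0) := by
  classical
  rw [altNum, Finset.card_filter]
  exact Finset.sum_congr rfl fun j _ => by simp [condP]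

lemma extVal_pos (n : ℕ → ℕ) (k : ℕ) (x : ∀ i : Fin k, Fin (n i)) (j : ℕ) (h : j < k) :
    extVal n k x j = (x ⟨j, h⟩).val := dif_pos h

lemma extVal_ge (n : ℕ → ℕ) (k : ℕ) (x : ∀ i : Fin k, Fin (n i)) (j : ℕ) (h : k ≤ j) :
    extVal n k x j = 0 := dif_neg (by omega)

lemma condP_congr {n : ℕ → ℕ} {k : ℕ} {x y : ∀ i : Fin k, Fin (n i)} {i : ℕ}
    (h1 : extVal n k x i = 0 ↔ extVal n k y i = 0)
    (h2 : extVal n k x (i + 1) = 0 ↔ extVal n k y (i + 1) = 0) :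
    condP n k x i ↔ condP n k y i := by unfold condP; tauto

lemma condP_opp {n : ℕ → ℕ} {k : ℕ} {x y : ∀ i : Fin k, Fin (n i)} {i : ℕ}
    (h1 : extVal n k x i = 0) (h1' : extVal n k y i ≠ 0)
    (h2 : extVal n k x (i + 1) = 0 ↔ extVal n k y (i + 1) = 0) :
    condP n k x i ↔ ¬ condP n k y i := by unfold condP; tauto

lemma sum_key {k t : ℕ} (ht : t < k) (f g : ℕ → ℕ)
    (hfg : ∀ i, i < k → i ≠ t → f i = g i)
    (h1 : f t + g t = 1) :
    (∑ i ∈ Finset.range k, f i = ∑ i ∈ Finset.range k, g i + 1) ∨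
    (∑ i ∈ Finset.range k, g i = ∑ i ∈ Finset.range k, f i + 1) := by
  have hmem : t ∈ Finset.range k := Finset.mem_range.2 ht
  rw [← Finset.add_sum_erase _ f hmem, ← Finset.add_sum_erase _ g hmem]
  have hS : ∑ i ∈ (Finset.range k).erase t, f i = ∑ i ∈ (Finset.range k).erase t, g i :=
    Finset.sum_congr rfl fun i hi =>
      hfg i (Finset.mem_range.1 (Finset.mem_of_mem_erase hi)) (Finset.ne_of_mem_erase hi)
  omega

/-- How the alternating number changes along an edge of `H_{n_1,…,n_k}`,
according to which adjacency rule produced the edge. -/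
theorem stmt_2 (n : ℕ → ℕ) (k : ℕ) (hk : 1 ≤ k) (hn : ∀ i < k, 2 ≤ n i)
    (x y : ∀ i : Fin k, Fin (n i)) :
    -- (a) rule (A1): `x` and `y` differ exactly in the first coordinate
    ((x ⟨0, by omega⟩ ≠ y ⟨0, by omega⟩ ∧ ∀ i : Fin k, 0 < i.val → x i = y i) →
      ((((x ⟨0, by omega⟩).val = 0 ∧ (y ⟨0, by omega⟩).val ≠ 0) ∨
        ((x ⟨0, by omega⟩).val ≠ 0 ∧ (y ⟨0, by omega⟩).val = 0)) →
          (altNum n k x = altNum n k y + 1 ∨ altNum n k y = altNum n k x + 1)) ∧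
      (((x ⟨0, by omega⟩).val ≠ 0 ∧ (y ⟨0, by omega⟩).val ≠ 0) →
          altNum n k x = altNum n k y)) ∧
    -- (b) rule (A2): `x` starts with `j+1` zeros, `y` with `j+1` nonzeros, rest equal
    (∀ j : Fin k,
      ((∀ i : Fin k, i.val ≤ j.val → (x i).val = 0) ∧
       (∀ i : Fin k, i.val ≤ j.val → (y i).val ≠ 0) ∧
       (∀ i : Fin k, j.val < i.val → x i = y i)) →
      (altNum n k x = altNum n k y + 1 ∨ altNum n k y = altNum n k x + 1)) ∧
    -- (c) rule (A3)
    (∀ m : Fin k,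
      (0 < m.val ∧ (∀ i : Fin k, i.val < m.val → (x i).val = 0 ∧ (y i).val = 0) ∧
       (x m).val ≠ 0 ∧ (y m).val ≠ 0 ∧ x m ≠ y m ∧
       (∀ i : Fin k, m.val < i.val → x i = y i)) →
      altNum n k x = altNum n k y) := by
  classical
  have hz : (0 : ℕ) < k := hk
  have ind_opp : ∀ {P Q : Prop} [Decidable P] [Decidable Q], (P ↔ ¬ Q) →
      (if P then 1 else 0) + (if Q then 1 else 0) = 1 := by
    intro P Q _ _ h
    by_cases hP : P
    · rw [if_pos hP, if_neg (h.mp hP)]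
    · have hQ : Q := by by_contra hq; exact hP (h.mpr hq)
      rw [if_neg hP, if_pos hQ]
  refine ⟨fun ⟨hne, heq⟩ => ?_, fun j ⟨hx0, hy0, hag⟩ => ?_,
    fun m ⟨hm, hpre, hxm, hym, hxy, hs⟩ => ?_⟩
  · -- part (a)
    have hEq : ∀ i : ℕ, 1 ≤ i → extVal n k x i = extVal n k y i := by
      intro i hi
      unfold extVal; split
      · exact congrArg Fin.val (heq ⟨i, ‹_›⟩ hi)
      · rfl
    constructor
    · intro hcase
      rw [altNum_eq_sum, altNum_eq_sum]
      refine sum_key hz _ _ ?_ ?_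
      · intro i hik hi0
        exact if_congr (condP_congr (by rw [hEq i (by omega)])
          (by rw [hEq (i + 1) (by omega)])) rfl rfl
      · apply ind_opp
        have h2 : extVal n k x (0 + 1) = 0 ↔ extVal n k y (0 + 1) = 0 := by
          rw [hEq 1 le_rfl]
        rcases hcase with ⟨hx1, hy1⟩ | ⟨hx1, hy1⟩
        · exact condP_opp (by rw [extVal_pos n k x 0 hz]; exact hx1)
            (by rw [extVal_pos n k y 0 hz]; exact hy1) h2
        · have := condP_opp (x := y) (y := x)
            (by rw [extVal_pos n k y 0 hz]; exact hy1)
            (by rw [extVal_pos n k x 0 hz]; exact hx1) h2.symm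
          exact iff_not_comm.mp this
    · intro hcase
      rw [altNum_eq_sum, altNum_eq_sum]
      refine Finset.sum_congr rfl fun i hi => ?_
      rcases Nat.eq_zero_or_pos i with rfl | hpos
      · refine if_congr (condP_congr ?_ (by rw [hEq 1 le_rfl])) rfl rfl
        rw [extVal_pos n k x 0 hz, extVal_pos n k y 0 hz]
        exact iff_of_false hcase.1 hcase.2
      · exact if_congr (condP_congr (by rw [hEq i hpos])
          (by rw [hEq (i + 1) (by omega)])) rfl rfl
  · -- part (b)
    have hjk : j.val < k := j.isLt
    have hxe : ∀ i : ℕ, i ≤ j.val → extVal n k x i = 0 := by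
      intro i hi
      rw [extVal_pos n k x i (by omega)]
      exact hx0 ⟨i, by omega⟩ hi
    have hye : ∀ i : ℕ, i ≤ j.val → extVal n k y i ≠ 0 := by
      intro i hi
      rw [extVal_pos n k y i (by omega)]
      exact hy0 ⟨i, by omega⟩ hi
    have hEq : ∀ i : ℕ, j.val < i → extVal n k x i = extVal n k y i := by
      intro i hi
      unfold extVal; split
      · exact congrArg Fin.val (hag ⟨i, ‹_›⟩ hi)
      · rfl
    rw [altNum_eq_sum, altNum_eq_sum]
    refine sum_key hjk _ _ ?_ ?_
    · intro i hik hij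
      rcases lt_or_gt_of_ne hij with hlt | hgt
      · rw [if_neg, if_neg] <;>
          rintro (⟨h1, h2⟩ | ⟨h1, h2⟩) <;>
          first
            | exact h2 (hxe (i + 1) (by omega))
            | exact h1 (hxe i (by omega))
            | exact (hye i (by omega)) h1
            | exact (hye (i + 1) (by omega)) h2
      · exact if_congr (condP_congr (by rw [hEq i hgt])
          (by rw [hEq (i + 1) (by omega)])) rfl rfl
    · exact ind_opp (condP_opp (hxe j.val le_rfl) (hye j.val le_rfl)
        (by rw [hEq (j.val + 1) (by omega)]))
  · -- part (c)
    have zex : ∀ i : ℕ, (extVal n k x i = 0 ↔ extVal n k y i = 0) := by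
      intro i
      rcases lt_trichotomy i m.val with hlt | rfl | hgt
      · rw [extVal_pos n k x i (by omega), extVal_pos n k y i (by omega)]
        exact iff_of_true (hpre ⟨i, by omega⟩ hlt).1 (hpre ⟨i, by omega⟩ hlt).2
      · rw [extVal_pos n k x m.val m.isLt, extVal_pos n k y m.val m.isLt]
        exact iff_of_false hxm hym
      · have : extVal n k x i = extVal n k y i := by
          unfold extVal; split
          · exact congrArg Fin.val (hs ⟨i, ‹_›⟩ hgt)
          · rfl
        rw [this]
    rw [altNum_eq_sum, altNum_eq_sum]
    exact Finset.sum_congr rfl fun i _ =>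
      if_congr (condP_congr (zex i) (zex (i + 1))) rfl rfl
end

section
/- Let x be any vertex of the hierarchical graph H_{n_1,…,n_k} and let r = 00…0 be the root (the all-zero string). Then the graph distance from x to r equals alt(x). -/
section Aux

variable {n : ℕ → ℕ} {k : ℕ}

/-- The predicate counted by `altNum`. -/
def PredA (n : ℕ → ℕ) (k : ℕ) (x : ∀ i : Fin k, Fin (n i)) (p : ℕ) : Prop :=
  (extVal n k x p = 0 ∧ extVal n k x (p + 1) ≠ 0) ∨
  (extVal n k x p ≠ 0 ∧ extVal n k x (p + 1) = 0)

instance (x : ∀ i : Fin k, Fin (n i)) : DecidablePred (PredA n k x) := fun p => by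
  unfold PredA; infer_instance

lemma altNum_eq (x : ∀ i : Fin k, Fin (n i)) :
    altNum n k x = ((Finset.range k).filter (PredA n k x)).card := by
  unfold altNum PredA
  congr 1

lemma extVal_of_ge {x : ∀ i : Fin k, Fin (n i)} {j : ℕ} (hj : k ≤ j) :
    extVal n k x j = 0 := dif_neg (by omega)

lemma extVal_lt (x : ∀ i : Fin k, Fin (n i)) {j : ℕ} (h : j < k) :
    extVal n k x j = (x ⟨j, h⟩).val := dif_pos h

lemma extVal_eq_of_agree {x y : ∀ i : Fin k, Fin (n i)} {c : ℕ}
    (h : ∀ i : Fin k, c < i.val → x i = y i) {p : ℕ} (hp : c < p) :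
    extVal n k x p = extVal n k y p := by
  unfold extVal
  split
  · next hpk => rw [h ⟨p, hpk⟩ hp]
  · rfl

lemma predA1 {x y : ∀ i : Fin k, Fin (n i)}
    (h : ∀ i : Fin k, 0 < i.val → x i = y i) (p : ℕ) (hp : p ≠ 0) :
    PredA n k x p ↔ PredA n k y p := by
  have h1 := extVal_eq_of_agree h (show 0 < p by omega)
  have h2 := extVal_eq_of_agree h (show 0 < p + 1 by omega)
  unfold PredA
  rw [h1, h2]

lemma predA2 {x y : ∀ i : Fin k, Fin (n i)} (j : Fin k)
    (hxz : ∀ i : Fin k, i.val ≤ j.val → (x i).val = 0)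
    (hyn : ∀ i : Fin k, i.val ≤ j.val → (y i).val ≠ 0)
    (hag : ∀ i : Fin k, j.val < i.val → x i = y i)
    (p : ℕ) (hp : p ≠ j.val) : PredA n k x p ↔ PredA n k y p := by
  rcases lt_or_gt_of_ne hp with h | h
  · have hjk := j.isLt
    have hpk : p < k := by omega
    have hp1k : p + 1 < k := by omega
    have hx_p : extVal n k x p = 0 := by
      rw [extVal_lt x hpk]; exact hxz ⟨p, hpk⟩ (show p ≤ j.val by omega)
    have hx_p1 : extVal n k x (p + 1) = 0 := by
      rw [extVal_lt x hp1k]; exact hxz ⟨p + 1, hp1k⟩ (show p + 1 ≤ j.val by omega)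
    have hy_p : extVal n k y p ≠ 0 := by
      rw [extVal_lt y hpk]; exact hyn ⟨p, hpk⟩ (show p ≤ j.val by omega)
    have hy_p1 : extVal n k y (p + 1) ≠ 0 := by
      rw [extVal_lt y hp1k]; exact hyn ⟨p + 1, hp1k⟩ (show p + 1 ≤ j.val by omega)
    unfold PredA
    constructor <;> rintro (⟨a, b⟩ | ⟨a, b⟩) <;> tauto
  · have h1 := extVal_eq_of_agree hag h
    have h2 := extVal_eq_of_agree hag (show j.val < p + 1 by omega)
    unfold PredA
    rw [h1, h2]

lemma predA3 {x y : ∀ i : Fin k, Fin (n i)} (m : Fin k)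
    (hpre : ∀ i : Fin k, i.val < m.val → (x i).val = 0 ∧ (y i).val = 0)
    (hx : (x m).val ≠ 0) (hy : (y m).val ≠ 0)
    (hs : ∀ i : Fin k, m.val < i.val → x i = y i)
    (p : ℕ) : PredA n k x p ↔ PredA n k y p := by
  have hz : ∀ q : ℕ, (extVal n k x q = 0 ↔ extVal n k y q = 0) := by
    intro q
    rcases lt_trichotomy q m.val with h | h | h
    · have hqk : q < k := by have := m.isLt; omega
      rw [extVal_lt x hqk, extVal_lt y hqk, (hpre ⟨q, hqk⟩ h).1, (hpre ⟨q, hqk⟩ h).2]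
    · subst h
      rw [extVal_lt x m.isLt, extVal_lt y m.isLt]
      exact ⟨fun hh => absurd hh hx, fun hh => absurd hh hy⟩
    · rw [extVal_eq_of_agree hs h]
  have h1 := hz p
  have h2 := hz (p + 1)
  unfold PredA
  tauto

lemma adj_pred_iff {x y : ∀ i : Fin k, Fin (n i)} (h : HierAdj n k x y) :
    ∃ j : ℕ, ∀ p, p ≠ j → (PredA n k x p ↔ PredA n k y p) := by
  obtain ⟨-, h1 | ⟨j, hj2, hag⟩ | ⟨m, _, hpre, hx, hy, _, hs⟩⟩ := h
  · exact ⟨0, fun p hp => predA1 h1 p hp⟩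
  · rcases hj2 with ⟨hxz, hyn⟩ | ⟨hyz, hxn⟩
    · exact ⟨j.val, fun p hp => predA2 j hxz hyn hag p hp⟩
    · exact ⟨j.val, fun p hp =>
        (predA2 j hyz hxn (fun i hi => (hag i hi).symm) p hp).symm⟩
  · exact ⟨k, fun p _ => predA3 m hpre hx hy hs p⟩

lemma alt_le_succ {x y : ∀ i : Fin k, Fin (n i)} (h : HierAdj n k x y) :
    altNum n k x ≤ altNum n k y + 1 := by
  obtain ⟨j, hj⟩ := adj_pred_iff h
  have hsub : (Finset.range k).filter (PredA n k x) ⊆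
      insert j ((Finset.range k).filter (PredA n k y)) := by
    intro p hp
    rcases Finset.mem_filter.mp hp with ⟨hpr, hPx⟩
    by_cases hpj : p = j
    · exact Finset.mem_insert.mpr (Or.inl hpj)
    · exact Finset.mem_insert_of_mem
        (Finset.mem_filter.mpr ⟨hpr, (hj p hpj).mp hPx⟩)
  calc altNum n k x = ((Finset.range k).filter (PredA n k x)).card := altNum_eq x
    _ ≤ (insert j ((Finset.range k).filter (PredA n k y))).card := Finset.card_le_card hsub
    _ ≤ ((Finset.range k).filter (PredA n k y)).card + 1 := Finset.card_insert_le _ _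
    _ = altNum n k y + 1 := by rw [altNum_eq]

lemma alt_le_walk {x z : ∀ i : Fin k, Fin (n i)} (p : (hierGraph n k).Walk x z) :
    altNum n k x ≤ altNum n k z + p.length := by
  induction p with
  | nil => simp
  | cons h q ih =>
    have := alt_le_succ h
    simp only [SimpleGraph.Walk.length_cons]
    omega

lemma eq_root {x r : ∀ i : Fin k, Fin (n i)} (hr : ∀ i, (r i).val = 0)
    (h : altNum n k x = 0) : x = r := by
  classical
  have hz : ∀ j, extVal n k x j = 0 := by
    intro j
    by_contra hj
    have hjk : j < k := by
      by_contra h'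
      exact hj (extVal_of_ge (by omega))
    set t := Nat.findGreatest (fun i => extVal n k x i ≠ 0) k with ht
    have htne : extVal n k x t ≠ 0 :=
      Nat.findGreatest_spec (P := fun i => extVal n k x i ≠ 0) (le_of_lt hjk) hj
    have htk : t < k := by
      by_contra h'
      exact htne (extVal_of_ge (by omega))
    have ht1 : extVal n k x (t + 1) = 0 := by
      have := Nat.findGreatest_is_greatest (P := fun i => extVal n k x i ≠ 0)
        (Nat.lt_succ_self t) (by omega)
      simpa using this
    have hPt : PredA n k x t := Or.inr ⟨htne, ht1⟩
    have hmem : t ∈ (Finset.range k).filter (PredA n k x) :=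
      Finset.mem_filter.mpr ⟨Finset.mem_range.mpr htk, hPt⟩
    rw [altNum_eq] at h
    rw [Finset.card_eq_zero.mp h] at hmem
    exact absurd hmem (Finset.notMem_empty t)
  funext i
  have hi := hz i.val
  rw [extVal_lt x i.isLt] at hi
  exact Fin.ext (by rw [hr i]; exact hi)

lemma exists_step (hn : ∀ i < k, 2 ≤ n i) (x : ∀ i : Fin k, Fin (n i))
    (h0 : altNum n k x ≠ 0) :
    ∃ y, HierAdj n k x y ∧ altNum n k y < altNum n k x := by
  classical
  have hE : ∃ j, extVal n k x j ≠ 0 := by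
    by_contra hall
    push_neg at hall
    apply h0
    rw [altNum_eq]
    apply Finset.card_eq_zero.mpr
    apply Finset.filter_false_of_mem
    intro p _
    unfold PredA
    simp [hall p, hall (p + 1)]
  have hQ : ∃ j, extVal n k x j ≠ 0 ∧ extVal n k x (j + 1) = 0 := by
    obtain ⟨s, hs⟩ := hE
    have hsk : s < k := by
      by_contra h'
      exact hs (extVal_of_ge (by omega))
    set t := Nat.findGreatest (fun i => extVal n k x i ≠ 0) k with ht
    have htne : extVal n k x t ≠ 0 :=
      Nat.findGreatest_spec (P := fun i => extVal n k x i ≠ 0) (le_of_lt hsk) hs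
    have htk : t < k := by
      by_contra h'
      exact htne (extVal_of_ge (by omega))
    have ht1 : extVal n k x (t + 1) = 0 := by
      have := Nat.findGreatest_is_greatest (P := fun i => extVal n k x i ≠ 0)
        (Nat.lt_succ_self t) (by omega)
      simpa using this
    exact ⟨t, htne, ht1⟩
  set t := Nat.find hQ with htdef
  have hQt := Nat.find_spec hQ
  have htk : t < k := by
    by_contra h'
    exact hQt.1 (extVal_of_ge (by omega))
  by_cases hx0 : extVal n k x 0 = 0
  · -- Case B: x starts with a zero. Fill the zero prefix with ones.
    set m := Nat.find hE with hmdef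
    have hm : extVal n k x m ≠ 0 := Nat.find_spec hE
    have hm0 : 0 < m := by
      rcases Nat.eq_zero_or_pos m with h | h
      · exact absurd hx0 (h ▸ hm)
      · exact h
    have hmk : m < k := by
      by_contra h'
      exact hm (extVal_of_ge (by omega))
    have hmin : ∀ i, i < m → extVal n k x i = 0 := fun i hi =>
      not_ne_iff.mp (Nat.find_min hE hi)
    set y : ∀ i : Fin k, Fin (n i) := fun i =>
      if h : i.val < m then ⟨1, by have := hn i.val i.isLt; omega⟩ else x i with hy
    have hyval1 : ∀ i : Fin k, i.val < m → (y i).val = 1 := by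
      intro i hi
      simp only [hy]
      rw [dif_pos hi]
    have hyeq : ∀ i : Fin k, m ≤ i.val → y i = x i := by
      intro i hi
      simp only [hy]
      rw [dif_neg (by omega)]
    have hxz : ∀ i : Fin k, i.val ≤ m - 1 → (x i).val = 0 := by
      intro i hi
      have := hmin i.val (by omega)
      rwa [extVal_lt x i.isLt] at this
    have hyn : ∀ i : Fin k, i.val ≤ m - 1 → (y i).val ≠ 0 := by
      intro i hi
      rw [hyval1 i (by omega)]
      omega
    have hag : ∀ i : Fin k, m - 1 < i.val → x i = y i := by
      intro i hi
      exact (hyeq i (by omega)).symm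
    have hadj : HierAdj n k x y := by
      refine ⟨?_, Or.inr (Or.inl ⟨⟨m - 1, by omega⟩, Or.inl ⟨hxz, hyn⟩, hag⟩)⟩
      intro hxy
      have h0k : (0 : ℕ) < k := by omega
      have hcf := congrFun hxy ⟨0, h0k⟩
      have hx00 : (x ⟨0, h0k⟩).val = 0 := by rwa [extVal_lt x h0k] at hx0
      have hy00 : (y ⟨0, h0k⟩).val = 1 := hyval1 _ hm0
      rw [hcf, hy00] at hx00
      omega
    have hiff : ∀ p, p ≠ m - 1 → (PredA n k x p ↔ PredA n k y p) :=
      fun p hp => predA2 (⟨m - 1, by omega⟩ : Fin k) hxz hyn hag p hp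
    have hmem : m - 1 ∈ (Finset.range k).filter (PredA n k x) := by
      refine Finset.mem_filter.mpr ⟨Finset.mem_range.mpr (by omega),
        Or.inl ⟨hmin (m - 1) (by omega), ?_⟩⟩
      have hmm : m - 1 + 1 = m := by omega
      rw [hmm]
      exact hm
    have hnotmem : m - 1 ∉ (Finset.range k).filter (PredA n k y) := by
      intro hmem'
      have hPy := (Finset.mem_filter.mp hmem').2
      have h1 : extVal n k y (m - 1) ≠ 0 := by
        rw [extVal_lt y (show m - 1 < k by omega)]
        rw [hyval1 ⟨m - 1, by omega⟩ (show m - 1 < m by omega)]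
        omega
      have h2 : extVal n k y (m - 1 + 1) ≠ 0 := by
        have hmm : m - 1 + 1 = m := by omega
        rw [hmm, extVal_lt y hmk, hyeq ⟨m, hmk⟩ (le_refl m)]
        rwa [extVal_lt x hmk] at hm
      rcases hPy with ⟨a, _⟩ | ⟨_, b⟩
      · exact h1 a
      · exact h2 b
    have hsub : (Finset.range k).filter (PredA n k y) ⊆
        (Finset.range k).filter (PredA n k x) := by
      intro p hp
      rcases Finset.mem_filter.mp hp with ⟨hpr, hPy⟩
      by_cases hpm : p = m - 1
      · exact absurd hp (hpm ▸ hnotmem)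
      · exact Finset.mem_filter.mpr ⟨hpr, (hiff p hpm).mpr hPy⟩
    refine ⟨y, hadj, ?_⟩
    rw [altNum_eq, altNum_eq]
    exact Finset.card_lt_card (Finset.ssubset_def.mpr
      ⟨hsub, fun h => hnotmem (h hmem)⟩)
  · -- Case A: x starts with a nonzero value. Zero out the nonzero prefix.
    have hall : ∀ i, i ≤ t → extVal n k x i ≠ 0 := by
      intro i
      induction i with
      | zero => intro _; exact hx0
      | succ a ih =>
        intro ha
        have ha' : a < t := by omega
        have hna := Nat.find_min hQ ha'
        have haz := ih (by omega)
        simp only [not_and_or, not_ne_iff] at hna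
        rcases hna with h | h
        · exact absurd h haz
        · exact h
    set y : ∀ i : Fin k, Fin (n i) := fun i =>
      if h : i.val ≤ t then ⟨0, by have := hn i.val i.isLt; omega⟩ else x i with hy
    have hyval0 : ∀ i : Fin k, i.val ≤ t → (y i).val = 0 := by
      intro i hi
      simp only [hy]
      rw [dif_pos hi]
    have hyeq : ∀ i : Fin k, t < i.val → y i = x i := by
      intro i hi
      simp only [hy]
      rw [dif_neg (by omega)]
    have hxn : ∀ i : Fin k, i.val ≤ t → (x i).val ≠ 0 := by
      intro i hi
      have := hall i.val hi
      rwa [extVal_lt x i.isLt] at this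
    have hag : ∀ i : Fin k, t < i.val → y i = x i := hyeq
    have hadj : HierAdj n k x y := by
      refine ⟨?_, Or.inr (Or.inl ⟨⟨t, htk⟩, Or.inr ⟨hyval0, hxn⟩,
        fun i hi => (hag i hi).symm⟩)⟩
      intro hxy
      have h0k : (0 : ℕ) < k := by omega
      have hcf := congrFun hxy ⟨0, h0k⟩
      have hx00 : (x ⟨0, h0k⟩).val ≠ 0 := hxn _ (show (0:ℕ) ≤ t by omega)
      have hy00 : (y ⟨0, h0k⟩).val = 0 := hyval0 _ (show (0:ℕ) ≤ t by omega)
      rw [hcf, hy00] at hx00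
      omega
    have hiff : ∀ p, p ≠ t → (PredA n k y p ↔ PredA n k x p) :=
      fun p hp => predA2 (⟨t, htk⟩ : Fin k) hyval0 hxn
        (fun i hi => (hag i hi)) p hp
    have hmem : t ∈ (Finset.range k).filter (PredA n k x) :=
      Finset.mem_filter.mpr ⟨Finset.mem_range.mpr htk, Or.inr ⟨hQt.1, hQt.2⟩⟩
    have hnotmem : t ∉ (Finset.range k).filter (PredA n k y) := by
      intro hmem'
      have hPy := (Finset.mem_filter.mp hmem').2
      have h1 : extVal n k y t = 0 := by
        rw [extVal_lt y htk]
        exact hyval0 ⟨t, htk⟩ (le_refl t)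
      have h2 : extVal n k y (t + 1) = 0 := by
        rw [extVal_eq_of_agree hag (Nat.lt_succ_self t)]
        exact hQt.2
      rcases hPy with ⟨_, b⟩ | ⟨a, _⟩
      · exact b h2
      · exact a h1
    have hsub : (Finset.range k).filter (PredA n k y) ⊆
        (Finset.range k).filter (PredA n k x) := by
      intro p hp
      rcases Finset.mem_filter.mp hp with ⟨hpr, hPy⟩
      by_cases hpm : p = t
      · exact absurd hp (hpm ▸ hnotmem)
      · exact Finset.mem_filter.mpr ⟨hpr, (hiff p hpm).mp hPy⟩
    refine ⟨y, hadj, ?_⟩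
    rw [altNum_eq, altNum_eq]
    exact Finset.card_lt_card (Finset.ssubset_def.mpr
      ⟨hsub, fun h => hnotmem (h hmem)⟩)

lemma exists_walk (hn : ∀ i < k, 2 ≤ n i) (r : ∀ i : Fin k, Fin (n i))
    (hr : ∀ i, (r i).val = 0) :
    ∀ N (x : ∀ i : Fin k, Fin (n i)), altNum n k x ≤ N →
      ∃ p : (hierGraph n k).Walk x r, p.length ≤ altNum n k x := by
  intro N
  induction N with
  | zero =>
    intro x hx
    have hx0 : altNum n k x = 0 := Nat.le_zero.mp hx
    have hxr : x = r := eq_root hr hx0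
    subst hxr
    exact ⟨SimpleGraph.Walk.nil, by simp⟩
  | succ N ih =>
    intro x hx
    by_cases hx0 : altNum n k x = 0
    · have hxr : x = r := eq_root hr hx0
      subst hxr
      exact ⟨SimpleGraph.Walk.nil, by simp⟩
    · obtain ⟨y, hadj, hlt⟩ := exists_step hn x hx0
      obtain ⟨q, hq⟩ := ih y (by omega)
      refine ⟨SimpleGraph.Walk.cons (show (hierGraph n k).Adj x y from hadj) q, ?_⟩
      simp only [SimpleGraph.Walk.length_cons]
      omega

lemma altNum_root {r : ∀ i : Fin k, Fin (n i)} (hr : ∀ i, (r i).val = 0) :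
    altNum n k r = 0 := by
  rw [altNum_eq]
  apply Finset.card_eq_zero.mpr
  apply Finset.filter_false_of_mem
  intro p _
  have hz : ∀ q, extVal n k r q = 0 := by
    intro q
    unfold extVal
    split
    · next h => exact hr ⟨q, h⟩
    · rfl
  unfold PredA
  simp [hz p, hz (p + 1)]

end Aux

/-- The distance from any vertex `x` to the root `r = 00…0` equals `alt(x)`. -/
theorem stmt_4 (n : ℕ → ℕ) (k : ℕ) (hk : 1 ≤ k) (hn : ∀ i < k, 2 ≤ n i)
    (x r : ∀ i : Fin k, Fin (n i)) (hr : ∀ i, (r i).val = 0) :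
    (hierGraph n k).dist x r = altNum n k x := by
  obtain ⟨p, hp⟩ := exists_walk hn r hr (altNum n k x) x (le_refl _)
  have hub : (hierGraph n k).dist x r ≤ altNum n k x :=
    le_trans (SimpleGraph.dist_le p) hp
  have hreach : (hierGraph n k).Reachable x r := ⟨p⟩
  obtain ⟨q, hq⟩ := hreach.exists_walk_length_eq_dist
  have hlb := alt_le_walk q
  rw [altNum_root hr, hq] at hlb
  omega
end

section
/- Let k ≥ 2 and let x = x_1…x_k and y = y_1…y_k be vertices of the hierarchical graph H_{n_1,…,n_k} with x_k ≠ y_k (no common suffix). Suppose x_k ≠ 0 and y_k ≠ 0, and that the maximal uniform suffix u of x and the maximal uniform suffix v of y both have length greater than 1 (equivalently, x_{k−1} ≠ 0 and y_{k−1} ≠ 0). Then the graph distance satisfies dist(x,y) = alt(x) + alt(y). -/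
namespace HGAux

open Finset

variable {n : ℕ → ℕ} {k : ℕ}

/-! ### Generic cardinality lemmas -/

lemma aux_card_le_succ {p q : ℕ → Prop} [DecidablePred p] [DecidablePred q]
    (s : Finset ℕ) (j0 : ℕ) (h : ∀ j ∈ s, j ≠ j0 → (p j ↔ q j)) :
    (s.filter p).card ≤ (s.filter q).card + 1 := by
  have hsub : s.filter p ⊆ insert j0 (s.filter q) := by
    intro j hj
    rcases Finset.mem_filter.mp hj with ⟨hjs, hpj⟩
    by_cases hje : j = j0
    · simp [hje]
    · exact Finset.mem_insert_of_mem (Finset.mem_filter.mpr ⟨hjs, (h j hjs hje).mp hpj⟩)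
  exact le_trans (Finset.card_le_card hsub) (Finset.card_insert_le _ _)

lemma aux_card_succ {p q : ℕ → Prop} [DecidablePred p] [DecidablePred q]
    (s : Finset ℕ) (j0 : ℕ) (hj0 : j0 ∈ s) (h : ∀ j ∈ s, j ≠ j0 → (p j ↔ q j))
    (hp : p j0) (hq : ¬ q j0) :
    (s.filter p).card = (s.filter q).card + 1 := by
  have he : s.filter p = insert j0 (s.filter q) := by
    ext j
    simp only [Finset.mem_filter, Finset.mem_insert]
    constructor
    · rintro ⟨hjs, hpj⟩
      by_cases hje : j = j0
      · exact Or.inl hje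
      · exact Or.inr ⟨hjs, (h j hjs hje).mp hpj⟩
    · rintro (rfl | ⟨hjs, hqj⟩)
      · exact ⟨hj0, hp⟩
      · by_cases hje : j = j0
        · subst hje; exact absurd hqj hq
        · exact ⟨hjs, (h j hjs hje).mpr hqj⟩
  rw [he, Finset.card_insert_of_notMem (fun hmem => hq (Finset.mem_filter.mp hmem).2)]

/-! ### extVal lemmas -/

lemma extVal_lt (x : ∀ i : Fin k, Fin (n i)) {j : ℕ} (h : j < k) :
    extVal n k x j = (x ⟨j, h⟩).val := by
  unfold extVal; rw [dif_pos h]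

lemma extVal_ge (x : ∀ i : Fin k, Fin (n i)) {j : ℕ} (h : k ≤ j) :
    extVal n k x j = 0 := by
  unfold extVal; rw [dif_neg (by omega)]

lemma extVal_fin (x : ∀ i : Fin k, Fin (n i)) (i : Fin k) :
    extVal n k x i.val = (x i).val := extVal_lt x i.isLt

/-! ### The alternation predicate -/

def AP (n : ℕ → ℕ) (k : ℕ) (x : ∀ i : Fin k, Fin (n i)) (j : ℕ) : Prop :=
  (extVal n k x j = 0 ∧ extVal n k x (j + 1) ≠ 0) ∨
  (extVal n k x j ≠ 0 ∧ extVal n k x (j + 1) = 0)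

instance (x : ∀ i : Fin k, Fin (n i)) : DecidablePred (AP n k x) := fun j => by
  unfold AP; exact inferInstance

lemma altNum_eq (x : ∀ i : Fin k, Fin (n i)) :
    altNum n k x = ((Finset.range k).filter (AP n k x)).card := rfl

end HGAux
namespace HGAux

open Finset

variable {n : ℕ → ℕ} {k : ℕ}

/-- Along any edge, `altNum` increases by at most 1. -/
lemma alt_adj {x y : ∀ i : Fin k, Fin (n i)} (hadj : HierAdj n k x y) :
    altNum n k x ≤ altNum n k y + 1 := by
  obtain ⟨hne, h1 | ⟨j0, hc, hb⟩ | ⟨m, hm, hpre, hxm, hym, hxy, hb⟩⟩ := hadj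
  · -- A1
    rw [altNum_eq, altNum_eq]
    refine aux_card_le_succ _ 0 ?_
    intro j _ hj0
    have he : ∀ i, 1 ≤ i → extVal n k x i = extVal n k y i := by
      intro i hi
      by_cases h : i < k
      · rw [extVal_lt x h, extVal_lt y h, h1 ⟨i, h⟩ (show 0 < i by omega)]
      · rw [extVal_ge x (by omega), extVal_ge y (by omega)]
    unfold AP
    rw [he j (by omega), he (j + 1) (by omega)]
  · -- A2
    rw [altNum_eq, altNum_eq]
    refine aux_card_le_succ _ j0.val ?_
    intro j hjr hj0
    have hbe : ∀ i, j0.val < i → extVal n k x i = extVal n k y i := by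
      intro i hi
      by_cases h : i < k
      · rw [extVal_lt x h, extVal_lt y h, hb ⟨i, h⟩ hi]
      · rw [extVal_ge x (by omega), extVal_ge y (by omega)]
    rcases Nat.lt_or_ge j j0.val with hlt | hge
    · have hj0k : j0.val < k := j0.isLt
      have hjk : j < k := by omega
      have hj1k : j + 1 < k := by omega
      rcases hc with ⟨hz, hnz⟩ | ⟨hz, hnz⟩
      · have e1 : extVal n k x j = 0 := by
          rw [extVal_lt x hjk]; exact hz ⟨j, hjk⟩ (show j ≤ j0.val by omega)
        have e2 : extVal n k x (j + 1) = 0 := by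
          rw [extVal_lt x hj1k]; exact hz ⟨j + 1, hj1k⟩ (show j + 1 ≤ j0.val by omega)
        have e3 : extVal n k y j ≠ 0 := by
          rw [extVal_lt y hjk]; exact hnz ⟨j, hjk⟩ (show j ≤ j0.val by omega)
        have e4 : extVal n k y (j + 1) ≠ 0 := by
          rw [extVal_lt y hj1k]; exact hnz ⟨j + 1, hj1k⟩ (show j + 1 ≤ j0.val by omega)
        unfold AP; simp [e1, e2, e3, e4]
      · have e1 : extVal n k y j = 0 := by
          rw [extVal_lt y hjk]; exact hz ⟨j, hjk⟩ (show j ≤ j0.val by omega)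
        have e2 : extVal n k y (j + 1) = 0 := by
          rw [extVal_lt y hj1k]; exact hz ⟨j + 1, hj1k⟩ (show j + 1 ≤ j0.val by omega)
        have e3 : extVal n k x j ≠ 0 := by
          rw [extVal_lt x hjk]; exact hnz ⟨j, hjk⟩ (show j ≤ j0.val by omega)
        have e4 : extVal n k x (j + 1) ≠ 0 := by
          rw [extVal_lt x hj1k]; exact hnz ⟨j + 1, hj1k⟩ (show j + 1 ≤ j0.val by omega)
        unfold AP; simp [e1, e2, e3, e4]
    · have hgt : j0.val < j := by omega
      unfold AP
      rw [hbe j hgt, hbe (j + 1) (by omega)]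
  · -- A3 : the two strings have the same zero-pattern
    have hz : ∀ j, extVal n k x j = 0 ↔ extVal n k y j = 0 := by
      intro j
      by_cases h : j < k
      · rcases Nat.lt_trichotomy j m.val with h2 | h2 | h2
        · have hp := hpre ⟨j, h⟩ h2
          rw [extVal_lt x h, extVal_lt y h, hp.1, hp.2]
        · have hj : (⟨j, h⟩ : Fin k) = m := Fin.ext h2
          rw [extVal_lt x h, extVal_lt y h, hj]
          simp [hxm, hym]
        · rw [extVal_lt x h, extVal_lt y h, hb ⟨j, h⟩ h2]
      · rw [extVal_ge x (by omega), extVal_ge y (by omega)]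
    have heq : altNum n k x = altNum n k y := by
      rw [altNum_eq, altNum_eq]
      congr 1
      apply Finset.filter_congr
      intro j _
      unfold AP
      have h1 := hz j
      have h2 := hz (j + 1)
      tauto
    omega

end HGAux
namespace HGAux

open Finset

variable {n : ℕ → ℕ} {k : ℕ}

/-! ### The modified alternation number `altH` (coordinate `k-1` treated as zero) -/

def EH (n : ℕ → ℕ) (k : ℕ) (x : ∀ i : Fin k, Fin (n i)) (j : ℕ) : ℕ :=
  if j = k - 1 then 0 else extVal n k x j

def HP (n : ℕ → ℕ) (k : ℕ) (x : ∀ i : Fin k, Fin (n i)) (j : ℕ) : Prop :=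
  (EH n k x j = 0 ∧ EH n k x (j + 1) ≠ 0) ∨
  (EH n k x j ≠ 0 ∧ EH n k x (j + 1) = 0)

instance (x : ∀ i : Fin k, Fin (n i)) : DecidablePred (HP n k x) := fun j => by
  unfold HP EH; exact inferInstance

def altH (n : ℕ → ℕ) (k : ℕ) (x : ∀ i : Fin k, Fin (n i)) : ℕ :=
  ((Finset.range k).filter (HP n k x)).card

lemma EH_last (x : ∀ i : Fin k, Fin (n i)) : EH n k x (k - 1) = 0 := if_pos rfl

lemma EH_ne (x : ∀ i : Fin k, Fin (n i)) {j : ℕ} (h : j ≠ k - 1) :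
    EH n k x j = extVal n k x j := if_neg h

lemma EH_ge (x : ∀ i : Fin k, Fin (n i)) {j : ℕ} (h : k ≤ j) : EH n k x j = 0 := by
  unfold EH
  split
  · rfl
  · exact extVal_ge x h

lemma EH_congr {x y : ∀ i : Fin k, Fin (n i)} {j : ℕ}
    (h : extVal n k x j = extVal n k y j) : EH n k x j = EH n k y j := by
  unfold EH; split <;> simp [h]

lemma HP_congr {x y : ∀ i : Fin k, Fin (n i)}
    (hz : ∀ j, extVal n k x j = 0 ↔ extVal n k y j = 0) (j : ℕ) :
    HP n k x j ↔ HP n k y j := by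
  have hEH : ∀ i, (EH n k x i = 0 ↔ EH n k y i = 0) := by
    intro i
    unfold EH
    split
    · rfl
    · exact hz i
  have h1 := hEH j
  have h2 := hEH (j + 1)
  unfold HP
  tauto

/-- Along any edge, `altH` increases by at most 1. -/
lemma altH_adj (hk : 2 ≤ k) {x y : ∀ i : Fin k, Fin (n i)} (hadj : HierAdj n k x y) :
    altH n k x ≤ altH n k y + 1 := by
  obtain ⟨hne, h1 | ⟨j0, hc, hb⟩ | ⟨m, hm, hpre, hxm, hym, hxy, hb⟩⟩ := hadj
  · -- A1
    unfold altH
    refine aux_card_le_succ _ 0 ?_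
    intro j _ hj0
    have he : ∀ i, 1 ≤ i → EH n k x i = EH n k y i := by
      intro i hi
      apply EH_congr
      by_cases h : i < k
      · rw [extVal_lt x h, extVal_lt y h, h1 ⟨i, h⟩ (show 0 < i by omega)]
      · rw [extVal_ge x (by omega), extVal_ge y (by omega)]
    unfold HP
    rw [he j (by omega), he (j + 1) (by omega)]
  · -- A2
    have hbe : ∀ i, j0.val < i → EH n k x i = EH n k y i := by
      intro i hi
      apply EH_congr
      by_cases h : i < k
      · rw [extVal_lt x h, extVal_lt y h, hb ⟨i, h⟩ hi]
      · rw [extVal_ge x (by omega), extVal_ge y (by omega)]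
    by_cases hj0 : j0.val = k - 1
    · -- the prefix is everything: witness k - 2
      unfold altH
      refine aux_card_le_succ _ (k - 2) ?_
      intro j hjr hjne
      have hjk : j < k := Finset.mem_range.mp hjr
      rcases hc with ⟨hz, hnz⟩ | ⟨hz, hnz⟩
      · -- x all zero, y all nonzero
        have hx0 : ∀ j', EH n k x j' = 0 := by
          intro j'
          unfold EH
          split
          · rfl
          · by_cases h : j' < k
            · rw [extVal_lt x h]; exact hz ⟨j', h⟩ (show j' ≤ j0.val by omega)
            · exact extVal_ge x (by omega)
        have hPx : ¬ HP n k x j := by unfold HP; simp [hx0]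
        have hPy : ¬ HP n k y j := by
          unfold HP
          rcases Nat.lt_or_ge j (k - 2) with hlt | hge
          · have e1 : EH n k y j ≠ 0 := by
              rw [EH_ne y (show j ≠ k - 1 by omega), extVal_lt y hjk]
              exact hnz ⟨j, hjk⟩ (show j ≤ j0.val by omega)
            have e2 : EH n k y (j + 1) ≠ 0 := by
              rw [EH_ne y (show j + 1 ≠ k - 1 by omega),
                extVal_lt y (show j + 1 < k by omega)]
              exact hnz ⟨j + 1, by omega⟩ (show j + 1 ≤ j0.val by omega)
            simp [e1, e2]
          · have hjeq : j = k - 1 := by omega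
            have e1 : EH n k y j = 0 := by rw [hjeq]; exact EH_last y
            have e2 : EH n k y (j + 1) = 0 := EH_ge y (by omega)
            simp [e1, e2]
        simp [hPx, hPy]
      · -- y all zero, x all nonzero
        have hy0 : ∀ j', EH n k y j' = 0 := by
          intro j'
          unfold EH
          split
          · rfl
          · by_cases h : j' < k
            · rw [extVal_lt y h]; exact hz ⟨j', h⟩ (show j' ≤ j0.val by omega)
            · exact extVal_ge y (by omega)
        have hPy : ¬ HP n k y j := by unfold HP; simp [hy0]
        have hPx : ¬ HP n k x j := by
          unfold HP
          rcases Nat.lt_or_ge j (k - 2) with hlt | hge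
          · have e1 : EH n k x j ≠ 0 := by
              rw [EH_ne x (show j ≠ k - 1 by omega), extVal_lt x hjk]
              exact hnz ⟨j, hjk⟩ (show j ≤ j0.val by omega)
            have e2 : EH n k x (j + 1) ≠ 0 := by
              rw [EH_ne x (show j + 1 ≠ k - 1 by omega),
                extVal_lt x (show j + 1 < k by omega)]
              exact hnz ⟨j + 1, by omega⟩ (show j + 1 ≤ j0.val by omega)
            simp [e1, e2]
          · have hjeq : j = k - 1 := by omega
            have e1 : EH n k x j = 0 := by rw [hjeq]; exact EH_last x
            have e2 : EH n k x (j + 1) = 0 := EH_ge x (by omega)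
            simp [e1, e2]
        simp [hPx, hPy]
    · -- j0 < k - 1 : witness j0
      have hj0k : j0.val < k - 1 := by have := j0.isLt; omega
      unfold altH
      refine aux_card_le_succ _ j0.val ?_
      intro j hjr hjne
      have hjk : j < k := Finset.mem_range.mp hjr
      rcases Nat.lt_or_ge j j0.val with hlt | hge
      · have ex1 : EH n k x j = extVal n k x j := EH_ne x (by omega)
        have ex2 : EH n k x (j + 1) = extVal n k x (j + 1) := EH_ne x (by omega)
        have ey1 : EH n k y j = extVal n k y j := EH_ne y (by omega)
        have ey2 : EH n k y (j + 1) = extVal n k y (j + 1) := EH_ne y (by omega)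
        have hjk1 : j + 1 < k := by omega
        rcases hc with ⟨hz, hnz⟩ | ⟨hz, hnz⟩
        · have e1 : extVal n k x j = 0 := by
            rw [extVal_lt x hjk]; exact hz ⟨j, hjk⟩ (show j ≤ j0.val by omega)
          have e2 : extVal n k x (j + 1) = 0 := by
            rw [extVal_lt x hjk1]; exact hz ⟨j + 1, hjk1⟩ (show j + 1 ≤ j0.val by omega)
          have e3 : extVal n k y j ≠ 0 := by
            rw [extVal_lt y hjk]; exact hnz ⟨j, hjk⟩ (show j ≤ j0.val by omega)
          have e4 : extVal n k y (j + 1) ≠ 0 := by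
            rw [extVal_lt y hjk1]; exact hnz ⟨j + 1, hjk1⟩ (show j + 1 ≤ j0.val by omega)
          unfold HP
          rw [ex1, ex2, ey1, ey2]
          simp [e1, e2, e3, e4]
        · have e1 : extVal n k y j = 0 := by
            rw [extVal_lt y hjk]; exact hz ⟨j, hjk⟩ (show j ≤ j0.val by omega)
          have e2 : extVal n k y (j + 1) = 0 := by
            rw [extVal_lt y hjk1]; exact hz ⟨j + 1, hjk1⟩ (show j + 1 ≤ j0.val by omega)
          have e3 : extVal n k x j ≠ 0 := by
            rw [extVal_lt x hjk]; exact hnz ⟨j, hjk⟩ (show j ≤ j0.val by omega)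
          have e4 : extVal n k x (j + 1) ≠ 0 := by
            rw [extVal_lt x hjk1]; exact hnz ⟨j + 1, hjk1⟩ (show j + 1 ≤ j0.val by omega)
          unfold HP
          rw [ex1, ex2, ey1, ey2]
          simp [e1, e2, e3, e4]
      · have hgt : j0.val < j := by omega
        unfold HP
        rw [hbe j hgt, hbe (j + 1) (by omega)]
  · -- A3
    have hz : ∀ j, extVal n k x j = 0 ↔ extVal n k y j = 0 := by
      intro j
      by_cases h : j < k
      · rcases Nat.lt_trichotomy j m.val with h2 | h2 | h2
        · have hp := hpre ⟨j, h⟩ h2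
          rw [extVal_lt x h, extVal_lt y h, hp.1, hp.2]
        · have hj : (⟨j, h⟩ : Fin k) = m := Fin.ext h2
          rw [extVal_lt x h, extVal_lt y h, hj]
          simp [hxm, hym]
        · rw [extVal_lt x h, extVal_lt y h, hb ⟨j, h⟩ h2]
      · rw [extVal_ge x (by omega), extVal_ge y (by omega)]
    have heq : altH n k x = altH n k y := by
      unfold altH
      congr 1
      apply Finset.filter_congr
      intro j _
      exact HP_congr hz j
    omega

end HGAux
namespace HGAux

open Finset

variable {n : ℕ → ℕ} {k : ℕ}

lemma altH_eq_zero {x : ∀ i : Fin k, Fin (n i)} (hall : ∀ j, EH n k x j = 0) :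
    altH n k x = 0 := by
  unfold altH
  rw [Finset.card_eq_zero, Finset.filter_eq_empty_iff]
  intro j _
  unfold HP
  simp [hall]

lemma EH_all_zero {x : ∀ i : Fin k, Fin (n i)}
    (hz : ∀ i : Fin k, i.val < k - 1 → (x i).val = 0) : ∀ j, EH n k x j = 0 := by
  intro j
  unfold EH
  split
  · rfl
  · rename_i h
    by_cases hj : j < k
    · rw [extVal_lt x hj]
      exact hz ⟨j, hj⟩ (show j < k - 1 by omega)
    · exact extVal_ge x (by omega)

lemma altH_le_one (hk : 2 ≤ k) {x : ∀ i : Fin k, Fin (n i)}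
    (hnz : ∀ i : Fin k, (x i).val ≠ 0) : altH n k x ≤ 1 := by
  unfold altH
  have hsub : (Finset.range k).filter (HP n k x) ⊆ {k - 2} := by
    intro j hj
    rcases Finset.mem_filter.mp hj with ⟨hjr, hp⟩
    have hjk : j < k := Finset.mem_range.mp hjr
    rw [Finset.mem_singleton]
    by_contra hne
    rcases Nat.lt_or_ge j (k - 2) with hlt | hge
    · have e1 : EH n k x j ≠ 0 := by
        rw [EH_ne x (show j ≠ k - 1 by omega), extVal_lt x hjk]
        exact hnz ⟨j, hjk⟩
      have e2 : EH n k x (j + 1) ≠ 0 := by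
        rw [EH_ne x (show j + 1 ≠ k - 1 by omega), extVal_lt x (show j + 1 < k by omega)]
        exact hnz ⟨j + 1, by omega⟩
      unfold HP at hp
      tauto
    · have hjeq : j = k - 1 := by omega
      have e1 : EH n k x j = 0 := by rw [hjeq]; exact EH_last x
      have e2 : EH n k x (j + 1) = 0 := EH_ge x (by omega)
      unfold HP at hp
      tauto
  calc ((Finset.range k).filter (HP n k x)).card ≤ ({k - 2} : Finset ℕ).card :=
        Finset.card_le_card hsub
    _ = 1 := Finset.card_singleton _

/-- Along an edge that changes the last coordinate, the two `altH` values sum to at most 1. -/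
lemma altH_add (hk : 2 ≤ k) {x y : ∀ i : Fin k, Fin (n i)} (hadj : HierAdj n k x y)
    (hne : x ⟨k - 1, Nat.sub_lt (by omega) Nat.one_pos⟩ ≠ y ⟨k - 1, Nat.sub_lt (by omega) Nat.one_pos⟩) :
    altH n k x + altH n k y ≤ 1 := by
  obtain ⟨hxy, h1 | ⟨j0, hc, hb⟩ | ⟨m, hm, hpre, hxm, hym, hxym, hb⟩⟩ := hadj
  · exact absurd (h1 ⟨k - 1, by omega⟩ (show 0 < k - 1 by omega)) hne
  · have hj0 : j0.val = k - 1 := by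
      by_contra h
      have hlt : j0.val < k - 1 := by have := j0.isLt; omega
      exact hne (hb ⟨k - 1, by omega⟩ (show j0.val < k - 1 by omega))
    rcases hc with ⟨hz, hnz⟩ | ⟨hz, hnz⟩
    · have e0 : altH n k x = 0 :=
        altH_eq_zero (EH_all_zero (fun i hi => hz i (show i.val ≤ j0.val by omega)))
      have e1 : altH n k y ≤ 1 :=
        altH_le_one hk (fun i => hnz i (show i.val ≤ j0.val by have := i.isLt; omega))
      omega
    · have e0 : altH n k y = 0 :=
        altH_eq_zero (EH_all_zero (fun i hi => hz i (show i.val ≤ j0.val by omega)))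
      have e1 : altH n k x ≤ 1 :=
        altH_le_one hk (fun i => hnz i (show i.val ≤ j0.val by have := i.isLt; omega))
      omega
  · have hm0 : m.val = k - 1 := by
      by_contra h
      have hlt : m.val < k - 1 := by have := m.isLt; omega
      exact hne (hb ⟨k - 1, by omega⟩ (show m.val < k - 1 by omega))
    have e0 : altH n k x = 0 :=
      altH_eq_zero (EH_all_zero (fun i hi => (hpre i (show i.val < m.val by omega)).1))
    have e1 : altH n k y = 0 :=
      altH_eq_zero (EH_all_zero (fun i hi => (hpre i (show i.val < m.val by omega)).2))
    omega

/-- For a vertex whose last two coordinates are nonzero, `altH` equals `altNum`. -/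
lemma altH_eq_altNum (hk : 2 ≤ k) {x : ∀ i : Fin k, Fin (n i)}
    (h1 : extVal n k x (k - 1) ≠ 0) (h2 : extVal n k x (k - 2) ≠ 0) :
    altH n k x = altNum n k x := by
  unfold altH
  rw [altNum_eq]
  have hA : k - 1 ∈ (Finset.range k).filter (AP n k x) := by
    refine Finset.mem_filter.mpr ⟨Finset.mem_range.mpr (by omega), Or.inr ⟨h1, ?_⟩⟩
    rw [show k - 1 + 1 = k by omega]
    exact extVal_ge x le_rfl
  have hH : k - 2 ∈ (Finset.range k).filter (HP n k x) := by
    refine Finset.mem_filter.mpr ⟨Finset.mem_range.mpr (by omega), Or.inr ⟨?_, ?_⟩⟩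
    · rw [EH_ne x (show k - 2 ≠ k - 1 by omega)]; exact h2
    · rw [show k - 2 + 1 = k - 1 by omega]; exact EH_last x
  have key : ((Finset.range k).filter (HP n k x)).erase (k - 2) =
      ((Finset.range k).filter (AP n k x)).erase (k - 1) := by
    ext j
    simp only [Finset.mem_erase, Finset.mem_filter, Finset.mem_range]
    constructor
    · rintro ⟨hj2, hjk, hp⟩
      have hj1 : j ≠ k - 1 := by
        rintro rfl
        have e1 : EH n k x (k - 1) = 0 := EH_last x
        have e2 : EH n k x (k - 1 + 1) = 0 := EH_ge x (by omega)
        unfold HP at hp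
        tauto
      have hjlt : j < k - 2 := by omega
      refine ⟨hj1, hjk, ?_⟩
      unfold HP at hp
      unfold AP
      rw [EH_ne x (show j ≠ k - 1 by omega), EH_ne x (show j + 1 ≠ k - 1 by omega)] at hp
      exact hp
    · rintro ⟨hj1, hjk, hp⟩
      have hj2 : j ≠ k - 2 := by
        rintro rfl
        unfold AP at hp
        rw [show k - 2 + 1 = k - 1 by omega] at hp
        tauto
      have hjlt : j < k - 2 := by omega
      refine ⟨hj2, hjk, ?_⟩
      unfold AP at hp
      unfold HP
      rw [EH_ne x (show j ≠ k - 1 by omega), EH_ne x (show j + 1 ≠ k - 1 by omega)]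
      exact hp
  have c1 := Finset.card_erase_add_one hH
  have c2 := Finset.card_erase_add_one hA
  rw [key] at c1
  omega

end HGAux
namespace HGAux

open Finset

variable {n : ℕ → ℕ} {k : ℕ}

lemma walk_altNum_le {x y : ∀ i : Fin k, Fin (n i)} (W : (hierGraph n k).Walk x y) :
    altNum n k x ≤ altNum n k y + W.length := by
  induction W with
  | nil => simp
  | cons hadj p ih =>
    have h1 : altNum n k _ ≤ altNum n k _ + 1 := alt_adj hadj
    simp only [SimpleGraph.Walk.length_cons]
    omega

lemma walk_altH_le (hk : 2 ≤ k) {x y : ∀ i : Fin k, Fin (n i)}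
    (W : (hierGraph n k).Walk x y) :
    altH n k x ≤ altH n k y + W.length := by
  induction W with
  | nil => simp
  | cons hadj p ih =>
    have h1 : altH n k _ ≤ altH n k _ + 1 := altH_adj hk hadj
    simp only [SimpleGraph.Walk.length_cons]
    omega

/-- Lower bound: any walk between vertices with different last coordinates has length
at least `altH x + altH y`. -/
lemma lower_walk (hk : 2 ≤ k) :
    ∀ {x y : ∀ i : Fin k, Fin (n i)} (W : (hierGraph n k).Walk x y),
      x ⟨k - 1, Nat.sub_lt (by omega) Nat.one_pos⟩ ≠ y ⟨k - 1, Nat.sub_lt (by omega) Nat.one_pos⟩ →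
      altH n k x + altH n k y ≤ W.length := by
  intro x y W
  induction W with
  | nil => intro h; exact absurd rfl h
  | @cons u v z hadj p ih =>
    intro hne
    by_cases hc : u ⟨k - 1, by omega⟩ = v ⟨k - 1, by omega⟩
    · have h2 : v ⟨k - 1, by omega⟩ ≠ z ⟨k - 1, by omega⟩ := by rw [← hc]; exact hne
      have hIH := ih h2
      have hLip : altH n k u ≤ altH n k v + 1 := altH_adj hk hadj
      simp only [SimpleGraph.Walk.length_cons]
      omega
    · have h01 : altH n k u + altH n k v ≤ 1 := altH_add hk hadj hc
      have h2 : altH n k z ≤ altH n k v + p.reverse.length := walk_altH_le hk p.reverse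
      rw [SimpleGraph.Walk.length_reverse] at h2
      simp only [SimpleGraph.Walk.length_cons]
      omega

end HGAux
namespace HGAux

open Finset

variable {n : ℕ → ℕ} {k : ℕ}

lemma altNum_step_nz (z w : ∀ i : Fin k, Fin (n i)) (t : ℕ) (ht1 : 1 ≤ t) (htk : t ≤ k)
    (hagree : ∀ j, t ≤ j → extVal n k w j = extVal n k z j)
    (hz : ∀ j, j < t → extVal n k z j ≠ 0)
    (hzt : extVal n k z t = 0)
    (hw : ∀ j, j < t → extVal n k w j = 0) :
    altNum n k w + 1 = altNum n k z := by
  rw [altNum_eq, altNum_eq]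
  have h := aux_card_succ (p := AP n k z) (q := AP n k w) (Finset.range k) (t - 1)
      (Finset.mem_range.mpr (by omega)) ?_ ?_ ?_
  · omega
  · intro j hjr hj0
    rcases Nat.lt_or_ge j (t - 1) with hlt | hge
    · have e1 := hz j (by omega)
      have e2 := hz (j + 1) (by omega)
      have e3 := hw j (by omega)
      have e4 := hw (j + 1) (by omega)
      unfold AP
      simp [e1, e2, e3, e4]
    · have hge' : t ≤ j := by omega
      unfold AP
      rw [hagree j hge', hagree (j + 1) (by omega)]
  · unfold AP
    refine Or.inr ⟨hz (t - 1) (by omega), ?_⟩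
    rw [show t - 1 + 1 = t by omega]
    exact hzt
  · unfold AP
    rw [show t - 1 + 1 = t by omega]
    have e1 := hw (t - 1) (by omega)
    have e2 : extVal n k w t = 0 := by rw [hagree t le_rfl]; exact hzt
    simp [e1, e2]

lemma altNum_step_z (z w : ∀ i : Fin k, Fin (n i)) (t : ℕ) (ht1 : 1 ≤ t) (htk : t ≤ k)
    (hagree : ∀ j, t ≤ j → extVal n k w j = extVal n k z j)
    (hz : ∀ j, j < t → extVal n k z j = 0)
    (hzt : extVal n k z t ≠ 0)
    (hw : ∀ j, j < t → extVal n k w j ≠ 0) :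
    altNum n k w + 1 = altNum n k z := by
  rw [altNum_eq, altNum_eq]
  have h := aux_card_succ (p := AP n k z) (q := AP n k w) (Finset.range k) (t - 1)
      (Finset.mem_range.mpr (by omega)) ?_ ?_ ?_
  · omega
  · intro j hjr hj0
    rcases Nat.lt_or_ge j (t - 1) with hlt | hge
    · have e1 := hz j (by omega)
      have e2 := hz (j + 1) (by omega)
      have e3 := hw j (by omega)
      have e4 := hw (j + 1) (by omega)
      unfold AP
      simp [e1, e2, e3, e4]
    · have hge' : t ≤ j := by omega
      unfold AP
      rw [hagree j hge', hagree (j + 1) (by omega)]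
  · unfold AP
    refine Or.inl ⟨hz (t - 1) (by omega), ?_⟩
    rw [show t - 1 + 1 = t by omega]
    exact hzt
  · unfold AP
    rw [show t - 1 + 1 = t by omega]
    have e1 := hw (t - 1) (by omega)
    have e2 : extVal n k w t ≠ 0 := by rw [hagree t le_rfl]; exact hzt
    simp [e1, e2]

/-- Every non-zero vertex has a neighbor with `altNum` exactly one smaller. -/
lemma exists_neighbor (hk : 1 ≤ k) (hn : ∀ i < k, 2 ≤ n i)
    {z z0 : ∀ i : Fin k, Fin (n i)} (hz0 : ∀ i : Fin k, (z0 i).val = 0)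
    (hzne : z ≠ z0) :
    ∃ w, HierAdj n k z w ∧ altNum n k w + 1 = altNum n k z := by
  by_cases h0 : (z ⟨0, by omega⟩).val = 0
  · -- first coordinate zero: make the maximal zero prefix nonzero
    have hex : ∃ t, extVal n k z t ≠ 0 := by
      by_contra h
      push_neg at h
      apply hzne
      funext i
      have h1 := h i.val
      rw [extVal_fin z i] at h1
      have h2 := hz0 i
      exact Fin.ext (by omega)
    set t := Nat.find hex with htdef
    have hts : extVal n k z t ≠ 0 := Nat.find_spec hex
    have htmin : ∀ i, i < t → extVal n k z i = 0 := by
      intro i hi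
      by_contra h
      exact Nat.find_min hex hi h
    have htk : t < k := by
      by_contra h
      exact hts (extVal_ge z (by omega))
    have ht1 : 1 ≤ t := by
      by_contra h
      apply hts
      rw [show t = 0 by omega, extVal_lt z (show 0 < k by omega)]
      exact h0
    set w : ∀ i : Fin k, Fin (n i) :=
      fun i => if (i : ℕ) < t then ⟨1, by have := hn i.1 i.2; omega⟩ else z i with hwdef
    have hw_lt : ∀ i : Fin k, (i : ℕ) < t → (w i).val = 1 := by
      intro i hi
      rw [hwdef]
      simp [hi]
    have hw_ge : ∀ i : Fin k, t ≤ (i : ℕ) → w i = z i := by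
      intro i hi
      rw [hwdef]
      simp [Nat.not_lt.mpr hi]
    have hew_lt : ∀ j, j < t → extVal n k w j ≠ 0 := by
      intro j hj
      have hjk : j < k := by omega
      rw [extVal_lt w hjk, hw_lt ⟨j, hjk⟩ hj]
      omega
    have hew_ge : ∀ j, t ≤ j → extVal n k w j = extVal n k z j := by
      intro j hj
      by_cases hjk : j < k
      · rw [extVal_lt w hjk, extVal_lt z hjk, hw_ge ⟨j, hjk⟩ hj]
      · rw [extVal_ge w (by omega), extVal_ge z (by omega)]
    refine ⟨w, ⟨?_, Or.inr (Or.inl ⟨⟨t - 1, by omega⟩, Or.inl ⟨?_, ?_⟩, ?_⟩)⟩,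
      altNum_step_z z w t ht1 (le_of_lt htk) hew_ge htmin hts hew_lt⟩
    · intro h
      have h1 := congrFun h ⟨0, by omega⟩
      have h2 : (w ⟨0, by omega⟩).val = 1 := hw_lt ⟨0, by omega⟩ (show (0:ℕ) < t by omega)
      rw [h1] at h0
      omega
    · intro i hi
      have hi' : i.val ≤ t - 1 := hi
      have := htmin i.val (by omega)
      rw [extVal_fin z i] at this
      exact this
    · intro i hi
      have hi' : i.val ≤ t - 1 := hi
      rw [hw_lt i (by omega)]
      omega
    · intro i hi
      have hi' : t - 1 < i.val := hi
      exact (hw_ge i (by omega)).symm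
  · -- first coordinate nonzero: zero out the maximal nonzero prefix
    have hex : ∃ t, extVal n k z t = 0 := ⟨k, extVal_ge z le_rfl⟩
    set t := Nat.find hex with htdef
    have hts : extVal n k z t = 0 := Nat.find_spec hex
    have htmin : ∀ i, i < t → extVal n k z i ≠ 0 := fun i hi => Nat.find_min hex hi
    have ht1 : 1 ≤ t := by
      by_contra h
      apply h0
      have h2 := hts
      rw [show t = 0 by omega, extVal_lt z (show 0 < k by omega)] at h2
      exact h2
    have htk : t ≤ k := by
      by_contra h
      exact htmin k (by omega) (extVal_ge z le_rfl)
    set w : ∀ i : Fin k, Fin (n i) :=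
      fun i => if (i : ℕ) < t then ⟨0, by have := hn i.1 i.2; omega⟩ else z i with hwdef
    have hw_lt : ∀ i : Fin k, (i : ℕ) < t → (w i).val = 0 := by
      intro i hi
      rw [hwdef]
      simp [hi]
    have hw_ge : ∀ i : Fin k, t ≤ (i : ℕ) → w i = z i := by
      intro i hi
      rw [hwdef]
      simp [Nat.not_lt.mpr hi]
    have hew_lt : ∀ j, j < t → extVal n k w j = 0 := by
      intro j hj
      have hjk : j < k := by omega
      rw [extVal_lt w hjk]
      exact hw_lt ⟨j, hjk⟩ hj
    have hew_ge : ∀ j, t ≤ j → extVal n k w j = extVal n k z j := by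
      intro j hj
      by_cases hjk : j < k
      · rw [extVal_lt w hjk, extVal_lt z hjk, hw_ge ⟨j, hjk⟩ hj]
      · rw [extVal_ge w (by omega), extVal_ge z (by omega)]
    refine ⟨w, ⟨?_, Or.inr (Or.inl ⟨⟨t - 1, by omega⟩, Or.inr ⟨?_, ?_⟩, ?_⟩)⟩,
      altNum_step_nz z w t ht1 htk hew_ge htmin hts hew_lt⟩
    · intro h
      have h1 := congrFun h ⟨0, by omega⟩
      have h2 : (w ⟨0, by omega⟩).val = 0 := hw_lt ⟨0, by omega⟩ (show (0:ℕ) < t by omega)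
      rw [h1] at h0
      exact h0 h2
    · intro i hi
      have hi' : i.val ≤ t - 1 := hi
      exact hw_lt i (by omega)
    · intro i hi
      have hi' : i.val ≤ t - 1 := hi
      have := htmin i.val (by omega)
      rw [extVal_fin z i] at this
      exact this
    · intro i hi
      have hi' : t - 1 < i.val := hi
      exact (hw_ge i (by omega)).symm

/-- There is a walk from any vertex to the zero vertex of length at most its
alternating number. -/
lemma walk_to_zero (hk : 1 ≤ k) (hn : ∀ i < k, 2 ≤ n i)
    {z0 : ∀ i : Fin k, Fin (n i)} (hz0 : ∀ i : Fin k, (z0 i).val = 0) :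
    ∀ (N : ℕ) (z : ∀ i : Fin k, Fin (n i)), altNum n k z ≤ N →
      ∃ W : (hierGraph n k).Walk z z0, W.length ≤ altNum n k z := by
  intro N
  induction N with
  | zero =>
    intro z hz
    by_cases h : z = z0
    · subst h; exact ⟨SimpleGraph.Walk.nil, by simp⟩
    · obtain ⟨w, hadj, hstep⟩ := exists_neighbor hk hn hz0 h
      omega
  | succ N ih =>
    intro z hz
    by_cases h : z = z0
    · subst h; exact ⟨SimpleGraph.Walk.nil, by simp⟩
    · obtain ⟨w, hadj, hstep⟩ := exists_neighbor hk hn hz0 h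
      obtain ⟨W', hW'⟩ := ih w (by omega)
      refine ⟨SimpleGraph.Walk.cons (show (hierGraph n k).Adj z w from hadj) W', ?_⟩
      simp only [SimpleGraph.Walk.length_cons]
      omega

end HGAux
/-- If `x_k ≠ y_k`, both `x_k, y_k` are nonzero, and the maximal uniform suffixes of `x`
and `y` both have length `> 1` (equivalently `x_{k-1} ≠ 0` and `y_{k-1} ≠ 0`), then
`dist(x,y) = alt(x) + alt(y)`. -/
theorem stmt_6 (n : ℕ → ℕ) (k : ℕ) (hk : 2 ≤ k) (hn : ∀ i < k, 2 ≤ n i)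
    (x y : ∀ i : Fin k, Fin (n i))
    (hne : x ⟨k - 1, by omega⟩ ≠ y ⟨k - 1, by omega⟩)
    (hxk : (x ⟨k - 1, by omega⟩).val ≠ 0) (hyk : (y ⟨k - 1, by omega⟩).val ≠ 0)
    (hxk1 : (x ⟨k - 2, by omega⟩).val ≠ 0) (hyk1 : (y ⟨k - 2, by omega⟩).val ≠ 0) :
    (hierGraph n k).dist x y = altNum n k x + altNum n k y := by

  set z0 : ∀ i : Fin k, Fin (n i) := fun i => ⟨0, by have := hn i.1 i.2; omega⟩ with hz0def
  have hz0 : ∀ i : Fin k, (z0 i).val = 0 := fun i => rfl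
  obtain ⟨Wx, hWx⟩ := HGAux.walk_to_zero (by omega) hn hz0 (altNum n k x) x le_rfl
  obtain ⟨Wy, hWy⟩ := HGAux.walk_to_zero (by omega) hn hz0 (altNum n k y) y le_rfl
  have hub : (hierGraph n k).dist x y ≤ altNum n k x + altNum n k y := by
    have h := SimpleGraph.dist_le (Wx.append Wy.reverse)
    rw [SimpleGraph.Walk.length_append, SimpleGraph.Walk.length_reverse] at h
    omega
  have hreach : (hierGraph n k).Reachable x y := ⟨Wx.append Wy.reverse⟩
  obtain ⟨P, hP⟩ := hreach.exists_walk_length_eq_dist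
  have hlb := HGAux.lower_walk hk P hne
  have ex1 : extVal n k x (k - 1) ≠ 0 := by
    rw [HGAux.extVal_lt x (show k - 1 < k by omega)]; exact hxk
  have ex2 : extVal n k x (k - 2) ≠ 0 := by
    rw [HGAux.extVal_lt x (show k - 2 < k by omega)]; exact hxk1
  have ey1 : extVal n k y (k - 1) ≠ 0 := by
    rw [HGAux.extVal_lt y (show k - 1 < k by omega)]; exact hyk
  have ey2 : extVal n k y (k - 2) ≠ 0 := by
    rw [HGAux.extVal_lt y (show k - 2 < k by omega)]; exact hyk1
  rw [HGAux.altH_eq_altNum hk ex1 ex2, HGAux.altH_eq_altNum hk ey1 ey2, hP] at hlb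
  omega
end
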